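/- arXiv:2005.02045 — 4 statements merged into one kernel-verified Lean document; each statement's English description precedes it below -/
import Mathlib

section
/- For every real Banach space X, the index 𝒯^cc(X) is unchanged if convex combinations of relatively weakly open subsets are replaced by convex combinations of slices; that is, 𝒯^cc(X) = inf{ r > 0 : there exist x ∈ S_X, n ∈ ℕ, λ_i ≥ 0 with Σ_{i=1}^n λ_i = 1, and slices S_1, …, S_n of B_X such that Σ_{i=1}^n λ_i S_i ⊆ B(x,r) }. -/
open Metric Set

noncomputable section

variable (X : Type*) [NormedAddCommGroup X] [NormedSpace ℝ X]

/-- A subset `U` of `X` is weakly open if it is open in the weak topology of `X`. -/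
def IsWeaklyOpen (U : Set X) : Prop := IsOpen (toWeakSpace ℝ X '' U)

/-- The slice `S(B_X, f, α) = {x ∈ B_X : f x > 1 - α}` of the closed unit ball of `X`. -/
def sliceSet (f : X →L[ℝ] ℝ) (α : ℝ) : Set X :=
  {y ∈ closedBall (0 : X) 1 | 1 - α < f y}

/-- `S` is a slice of the closed unit ball of `X`, i.e. `S = S(B_X, f, α)` for some norm-one
functional `f` and some `α > 0`. -/
def IsSlice (S : Set X) : Prop :=
  ∃ f : X →L[ℝ] ℝ, ‖f‖ = 1 ∧ ∃ α > (0 : ℝ), S = sliceSet X f α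

/-- The Daugavet index of thickness `𝒯ˢ(X)`: the infimum of all `r > 0` such that some slice of
the closed unit ball is contained in a closed ball of radius `r` centered at a point of the unit
sphere. -/
def Ts : ℝ :=
  sInf {r : ℝ | 0 < r ∧ ∃ x : X, ‖x‖ = 1 ∧ ∃ S : Set X, IsSlice X S ∧ S ⊆ closedBall x r}

/-- `W` is a nonempty relatively weakly open subset of the closed unit ball of `X`. -/
def IsRelWeakOpen (W : Set X) : Prop :=
  W.Nonempty ∧ ∃ U : Set X, IsWeaklyOpen X U ∧ W = closedBall (0 : X) 1 ∩ U

/-- The Daugavet index of thickness `𝒯(X)`: the infimum of all `r > 0` such that some nonempty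
relatively weakly open subset of the closed unit ball is contained in a closed ball of radius `r`
centered at a point of the unit sphere. -/
def Tw : ℝ :=
  sInf {r : ℝ | 0 < r ∧ ∃ x : X, ‖x‖ = 1 ∧ ∃ W : Set X, IsRelWeakOpen X W ∧
    W ⊆ closedBall x r}

/-- The convex combination `∑ i, l i • W i` of the sets `W i` (the set of all sums
`∑ i, l i • w i` with `w i ∈ W i`). -/
def comboSet {n : ℕ} (l : Fin n → ℝ) (W : Fin n → Set X) : Set X :=
  {z : X | ∃ w : Fin n → X, (∀ i, w i ∈ W i) ∧ z = ∑ i, l i • w i}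

/-- The Daugavet index of thickness `𝒯ᶜᶜ(X)`: the infimum of all `r > 0` such that some convex
combination of nonempty relatively weakly open subsets of the closed unit ball is contained in a
closed ball of radius `r` centered at a point of the unit sphere. -/
def Tcc : ℝ :=
  sInf {r : ℝ | 0 < r ∧ ∃ x : X, ‖x‖ = 1 ∧ ∃ (n : ℕ) (l : Fin n → ℝ) (W : Fin n → Set X),
    (∀ i, 0 ≤ l i) ∧ (∑ i, l i) = 1 ∧ (∀ i, IsRelWeakOpen X (W i)) ∧
    comboSet X l W ⊆ closedBall x r}

/-- `X` has the Daugavet property: for every `x` in the unit sphere, every `ε > 0` and every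
slice `S` of the closed unit ball there exists `y ∈ S` with `‖x - y‖ ≥ 2 - ε`. -/
def DaugavetProperty : Prop :=
  ∀ x : X, ‖x‖ = 1 → ∀ ε > (0 : ℝ), ∀ S : Set X, IsSlice X S → ∃ y ∈ S, 2 - ε ≤ ‖x - y‖

/-! ### Auxiliary lemmas -/

/-- Pad a fintype-indexed sum into a `Fin n`-indexed sum via an embedding. -/
lemma sum_pad {E : Type*} [AddCommMonoid E] {ι : Type*} [Fintype ι] {n : ℕ}
    (emb : ι ↪ Fin n) (F : ι → E) :
    ∑ j : Fin n, (if h : ∃ i, emb i = j then F h.choose else 0) = ∑ i, F i := by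
  classical
  rw [← Finset.sum_subset (Finset.subset_univ (Finset.univ.map emb))]
  · rw [Finset.sum_map]
    refine Finset.sum_congr rfl fun i _ => ?_
    have h : ∃ i', emb i' = emb i := ⟨i, rfl⟩
    rw [dif_pos h]
    congr 1
    exact emb.injective h.choose_spec
  · intro j _ hj
    rw [dif_neg]
    intro ⟨i, hi⟩
    exact hj (Finset.mem_map.mpr ⟨i, Finset.mem_univ i, hi⟩)

/-- The convex hull of a compact set in a finite-dimensional space `ι → ℝ` is compact. -/
lemma isCompact_convexHull_of_isCompact {ι : Type*} [Fintype ι] {A : Set (ι → ℝ)}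
    (hA : IsCompact A) : IsCompact (convexHull ℝ A) := by
  classical
  rcases A.eq_empty_or_nonempty with rfl | ⟨a0, ha0⟩
  · simp
  set n := Fintype.card ι + 1 with hn
  set φ : (Fin n → ℝ) × (Fin n → (ι → ℝ)) → (ι → ℝ) := fun p => ∑ j, p.1 j • p.2 j with hφ
  have hcont : Continuous φ := by
    apply continuous_finset_sum
    intro j _
    exact ((continuous_apply j).comp continuous_fst).smul ((continuous_apply j).comp continuous_snd)
  have hdom : IsCompact ((stdSimplex ℝ (Fin n)) ×ˢ {z : Fin n → (ι → ℝ) | ∀ i, z i ∈ A}) := by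
    refine (isCompact_stdSimplex _ _).prod ?_
    have := isCompact_univ_pi (fun _ : Fin n => hA); simpa [Set.pi] using this
  have himg : convexHull ℝ A
      = φ '' ((stdSimplex ℝ (Fin n)) ×ˢ {z : Fin n → (ι → ℝ) | ∀ i, z i ∈ A}) := by
    apply Subset.antisymm
    · intro x hx
      obtain ⟨ι', _, z, w, hrange, haff, hpos, hsum, hcomb⟩ :=
        eq_pos_convex_span_of_mem_convexHull hx
      have hcard : Fintype.card ι' ≤ n := by
        have h1 := haff.card_le_finrank_succ
        have h2 : Module.finrank ℝ ↥(vectorSpan ℝ (Set.range z)) ≤ Module.finrank ℝ (ι → ℝ) :=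
          Submodule.finrank_le _
        rw [Module.finrank_pi ℝ] at h2
        omega
      obtain ⟨emb⟩ : Nonempty (ι' ↪ Fin n) :=
        Function.Embedding.nonempty_of_card_le (by simpa using hcard)
      refine ⟨⟨fun j => if h : ∃ i, emb i = j then w h.choose else 0,
              fun j => if h : ∃ i, emb i = j then z h.choose else a0⟩, ⟨⟨?_, ?_⟩, ?_⟩, ?_⟩
      · intro j; dsimp only; split
        · exact (hpos _).le
        · exact le_rfl
      · simpa using (sum_pad emb w).trans hsum
      · intro i; dsimp only; split
        · exact hrange (Set.mem_range_self _)
        · exact ha0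
      · show ∑ j : Fin n, _ • _ = x
        rw [← hcomb, ← sum_pad emb (fun i => w i • z i)]
        refine Finset.sum_congr rfl fun j _ => ?_
        by_cases h : ∃ i, emb i = j
        · simp [dif_pos h]
        · simp [dif_neg h]
    · rintro x ⟨⟨w, z⟩, ⟨⟨hw0, hw1⟩, hz⟩, rfl⟩
      exact mem_convexHull_of_exists_fintype w z hw0 hw1 hz rfl
  rw [himg]
  exact hdom.image hcont

/-- Every extreme point of a compact convex set in finite dimensions is a denting point. -/
lemma dent_aux {ι : Type*} [Fintype ι] {K : Set (ι → ℝ)} (hKc : IsCompact K)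
    (hKconv : Convex ℝ K) {e : ι → ℝ} (he : e ∈ K.extremePoints ℝ) {r : ℝ} (hr : 0 < r) :
    ∃ (g : (ι → ℝ) →L[ℝ] ℝ) (s : ℝ), s < g e ∧ ∀ k ∈ K, s < g k → ‖k - e‖ < r := by
  set A := K \ ball e r with hA
  have hAc : IsCompact A := by
    rw [hA, diff_eq]
    exact hKc.inter_right isOpen_ball.isClosed_compl
  set C := convexHull ℝ A with hC
  have hCc : IsCompact C := isCompact_convexHull_of_isCompact hAc
  have heC : e ∉ C := by
    intro hmem
    have h1 : A ⊆ K \ {e} :=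
      diff_subset_diff_right (Set.singleton_subset_iff.mpr (Metric.mem_ball_self hr))
    have h2 := (hKconv.mem_extremePoints_iff_mem_diff_convexHull_diff.mp he).2
    exact h2 (convexHull_mono h1 hmem)
  obtain ⟨g, u, hgC, hgu⟩ :=
    geometric_hahn_banach_closed_point (convex_convexHull ℝ A) hCc.isClosed heC
  refine ⟨g, u, hgu, fun k hk hgk => ?_⟩
  by_contra hnot
  have hkA : k ∈ A := ⟨hk, by simpa [dist_eq_norm] using hnot⟩
  exact absurd hgk (not_lt.mpr (hgC k (subset_convexHull ℝ A hkA)).le)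

/-- Finite-dimensional core of Bourgain's lemma: every point of a compact convex set is
approximated by a convex combination of small slices. -/
lemma finDimCore {ι : Type*} [Fintype ι] {K : Set (ι → ℝ)} (hKc : IsCompact K)
    (hKconv : Convex ℝ K) {p : ι → ℝ} (hp : p ∈ K) {ε : ℝ} (hε : 0 < ε) :
    ∃ (N : ℕ) (μ : Fin N → ℝ) (g : Fin N → ((ι → ℝ) →L[ℝ] ℝ)) (s : Fin N → ℝ),
      (∀ j, 0 ≤ μ j) ∧ ∑ j, μ j = 1 ∧ (∀ j, ∃ k ∈ K, s j < g j k) ∧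
      ∀ k : Fin N → (ι → ℝ), (∀ j, k j ∈ K) → (∀ j, s j < g j (k j)) →
        ‖(∑ j, μ j • k j) - p‖ < ε := by
  classical
  set D : Set (ι → ℝ) := {q | q ∈ K ∧ ∃ (g : (ι → ℝ) →L[ℝ] ℝ) (s : ℝ),
    (∃ k ∈ K, s < g k) ∧ ∀ k ∈ K, s < g k → ‖k - q‖ < ε / 2} with hD
  have hED : K.extremePoints ℝ ⊆ D := by
    intro e he
    obtain ⟨g, s, hse, hsmall⟩ := dent_aux hKc hKconv he (half_pos hε)
    exact ⟨he.1, g, s, ⟨e, he.1, hse⟩, hsmall⟩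
  have hKM := closure_convexHull_extremePoints hKc hKconv
  have hp' : p ∈ closure (convexHull ℝ (K.extremePoints ℝ)) := by rw [hKM]; exact hp
  obtain ⟨p', hp'mem, hp'close⟩ := Metric.mem_closure_iff.mp hp' (ε / 2) (half_pos hε)
  have hp'D : p' ∈ convexHull ℝ D := convexHull_mono hED hp'mem
  obtain ⟨ι', _, w, z, hw0, hw1, hzD, hcomb⟩ := mem_convexHull_iff_exists_fintype.mp hp'D
  set eq := Fintype.equivFin ι' with heq
  set N := Fintype.card ι'
  set μ : Fin N → ℝ := fun j => w (eq.symm j) with hμ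
  set q : Fin N → (ι → ℝ) := fun j => z (eq.symm j) with hq
  have hqD : ∀ j, q j ∈ D := fun j => hzD _
  choose g s hne hsmall using fun j => (hqD j).2
  refine ⟨N, μ, g, s, fun j => hw0 _, ?_, hne, ?_⟩
  · rw [hμ, Equiv.sum_comp eq.symm w, hw1]
  · intro k hkK hks
    have hqsum : ∑ j, μ j • q j = p' := by
      rw [hμ]
      simpa using (Equiv.sum_comp eq.symm (fun i => w i • z i)).trans hcomb
    have key : ‖(∑ j, μ j • k j) - p‖ ≤ ‖∑ j, μ j • (k j - q j)‖ + ‖p' - p‖ := by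
      have : (∑ j, μ j • k j) - p = (∑ j, μ j • (k j - q j)) + (p' - p) := by
        rw [← hqsum]
        simp only [smul_sub, Finset.sum_sub_distrib]
        abel
      rw [this]
      exact norm_add_le _ _
    have h1 : ‖∑ j, μ j • (k j - q j)‖ ≤ ε / 2 := by
      calc ‖∑ j, μ j • (k j - q j)‖ ≤ ∑ j, ‖μ j • (k j - q j)‖ := norm_sum_le _ _
        _ ≤ ∑ j, μ j * (ε / 2) := by
            refine Finset.sum_le_sum fun j _ => ?_
            rw [norm_smul, Real.norm_of_nonneg (hw0 _)]
            exact mul_le_mul_of_nonneg_left (hsmall j (k j) (hkK j) (hks j)).le (hw0 _)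
        _ = ε / 2 := by rw [← Finset.sum_mul, show ∑ j, μ j = 1 from by
              rw [hμ, Equiv.sum_comp eq.symm w, hw1], one_mul]
    have h2 : ‖p' - p‖ < ε / 2 := by rw [← dist_eq_norm, dist_comm]; exact hp'close
    linarith

variable {X}

/-- Sets of the form `{y : c < f y}` are weakly open. -/
lemma isWeaklyOpen_gt (f : X →L[ℝ] ℝ) (c : ℝ) : IsWeaklyOpen X {y : X | c < f y} := by
  have himg : toWeakSpace ℝ X '' {y : X | c < f y}
      = {z : WeakSpace ℝ X | c < (topDualPairing ℝ X).flip z f} := by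
    ext z
    constructor
    · rintro ⟨y, hy, rfl⟩; exact hy
    · intro hz; exact ⟨(toWeakSpace ℝ X).symm z, hz, by simp⟩
  rw [IsWeaklyOpen, himg]
  exact isOpen_lt continuous_const (WeakBilin.eval_continuous _ f)

/-- From a weakly open set and a point in it, extract a basic weak neighborhood. -/
lemma exists_basic_nbhd (U : Set X) (hU : IsWeaklyOpen X U) (x : X) (hx : x ∈ U) :
    ∃ (I : Finset (X →L[ℝ] ℝ)) (δ : ℝ), 0 < δ ∧
      {y : X | ∀ f ∈ I, |f y - f x| < δ} ⊆ U := by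
  classical
  set ρ : WeakSpace ℝ X → ((X →L[ℝ] ℝ) → ℝ) := fun z f => (topDualPairing ℝ X).flip z f with hρ
  obtain ⟨V, hVopen, hVpre⟩ := isOpen_induced_iff.mp hU
  have hxV : ρ (toWeakSpace ℝ X x) ∈ V := by
    have : toWeakSpace ℝ X x ∈ toWeakSpace ℝ X '' U := ⟨x, hx, rfl⟩
    rw [← hVpre] at this
    exact this
  obtain ⟨I, u, hI, hIV⟩ := isOpen_pi_iff.mp hVopen _ hxV
  choose ε hεpos hεball using fun f (hf : f ∈ I) =>
    Metric.isOpen_iff.mp (hI f hf).1 _ (hI f hf).2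
  by_cases hIne : I.Nonempty
  · set δ := I.attach.inf' (by simpa using hIne) (fun f => ε f.1 f.2) with hδ
    have hδpos : 0 < δ := by
      rw [hδ, Finset.lt_inf'_iff]
      exact fun f _ => hεpos f.1 f.2
    refine ⟨I, δ, hδpos, fun y hy => ?_⟩
    have : ρ (toWeakSpace ℝ X y) ∈ V := by
      apply hIV
      intro f hf
      apply hεball f hf
      have hδle : δ ≤ ε f hf := by
        rw [hδ]
        exact Finset.inf'_le _ (Finset.mem_attach _ ⟨f, hf⟩)
      have hlt : |f y - f x| < δ := hy f hf
      simp only [Metric.mem_ball, Real.dist_eq]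
      calc |ρ (toWeakSpace ℝ X y) f - ρ (toWeakSpace ℝ X x) f| = |f y - f x| := rfl
        _ < δ := hlt
        _ ≤ ε f hf := hδle
    have h2 : toWeakSpace ℝ X y ∈ toWeakSpace ℝ X '' U := by rw [← hVpre]; exact this
    obtain ⟨y', hy', heq⟩ := h2
    rwa [← (toWeakSpace ℝ X).injective heq]
  · refine ⟨I, 1, one_pos, fun y _ => ?_⟩
    have : ρ (toWeakSpace ℝ X y) ∈ V := by
      apply hIV
      intro f hf
      rw [Finset.not_nonempty_iff_eq_empty] at hIne
      subst hIne
      exact absurd hf (Finset.notMem_empty f)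
    have h2 : toWeakSpace ℝ X y ∈ toWeakSpace ℝ X '' U := by rw [← hVpre]; exact this
    obtain ⟨y', hy', heq⟩ := h2
    rwa [← (toWeakSpace ℝ X).injective heq]

/-- The closed unit ball is itself a slice. -/
lemma isSlice_closedBall [Nontrivial X] [CompleteSpace X] :
    IsSlice X (closedBall (0 : X) 1) := by
  obtain ⟨x, hx⟩ := exists_ne (0 : X)
  obtain ⟨f, hf1, _⟩ := exists_dual_vector ℝ x (norm_ne_zero_iff.mpr hx)
  refine ⟨f, hf1, 3, by norm_num, ?_⟩
  ext y
  simp only [sliceSet, mem_setOf_eq, mem_closedBall, dist_zero_right]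
  constructor
  · intro h
    refine ⟨h, ?_⟩
    have h1 : ‖f y‖ ≤ ‖y‖ := by simpa [hf1] using f.le_opNorm y
    have h2 : |f y| ≤ 1 := by rw [← Real.norm_eq_abs]; exact h1.trans h
    have := abs_le.mp h2
    linarith
  · exact fun h => h.1

/-- Any nonempty superlevel set of the unit ball by a functional is a slice. -/
lemma isSlice_of_exists [Nontrivial X] [CompleteSpace X] (h : X →L[ℝ] ℝ) (s : ℝ)
    (hne : ∃ y : X, ‖y‖ ≤ 1 ∧ s < h y) :
    IsSlice X {y ∈ closedBall (0 : X) 1 | s < h y} := by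
  obtain ⟨y0, hy0, hsy0⟩ := hne
  by_cases hz : h = 0
  · subst hz
    have hs : s < 0 := by simpa using hsy0
    have : {y ∈ closedBall (0 : X) 1 | s < (0 : X →L[ℝ] ℝ) y} = closedBall (0 : X) 1 := by
      ext y; simp [hs]
    rw [this]
    exact isSlice_closedBall
  · have hpos : 0 < ‖h‖ := norm_pos_iff.mpr hz
    have hs : s < ‖h‖ := by
      have : h y0 ≤ ‖h‖ := by
        calc h y0 ≤ |h y0| := le_abs_self _
          _ = ‖h y0‖ := (Real.norm_eq_abs _).symm
          _ ≤ ‖h‖ * ‖y0‖ := h.le_opNorm y0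
          _ ≤ ‖h‖ * 1 := mul_le_mul_of_nonneg_left hy0 (norm_nonneg _)
          _ = ‖h‖ := mul_one _
      linarith
    refine ⟨‖h‖⁻¹ • h, ?_, 1 - s / ‖h‖, ?_, ?_⟩
    · have hns := norm_smul (‖h‖⁻¹) h
      rw [hns]
      simp [abs_of_pos hpos, inv_mul_cancel₀ hpos.ne']
    · have : s / ‖h‖ < 1 := (div_lt_one hpos).mpr hs
      linarith
    · have key : ∀ t : ℝ, s / ‖h‖ < ‖h‖⁻¹ * t ↔ s < t := by
        intro t
        rw [div_eq_mul_inv, mul_comm (‖h‖⁻¹) t]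
        exact mul_lt_mul_iff_of_pos_right (inv_pos.mpr hpos)
      ext y
      simp only [sliceSet, mem_setOf_eq, ContinuousLinearMap.coe_smul', Pi.smul_apply,
        smul_eq_mul, sub_sub_cancel, key]

/-- Every slice is a nonempty relatively weakly open subset of the unit ball. -/
lemma isRelWeakOpen_of_isSlice {S : Set X} (hS : IsSlice X S) : IsRelWeakOpen X S := by
  obtain ⟨f, hf1, α, hα, rfl⟩ := hS
  constructor
  · by_cases hneg : 1 - α < 0
    · exact ⟨0, by simp [sliceSet], by simpa [sliceSet] using hneg⟩
    · push_neg at hneg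
      have hlt : 1 - α < ‖f‖ := by rw [hf1]; linarith
      obtain ⟨y, hy1, hy2⟩ := f.exists_lt_apply_of_lt_opNorm hlt
      rw [Real.norm_eq_abs, lt_abs] at hy2
      rcases hy2 with hy2 | hy2
      · exact ⟨y, by simp [sliceSet, hy1.le], hy2⟩
      · refine ⟨-y, by simp [sliceSet, hy1.le], ?_⟩
        · simpa using hy2
  · refine ⟨{y : X | 1 - α < f y}, isWeaklyOpen_gt f (1 - α), ?_⟩
    ext y
    simp only [sliceSet, mem_setOf_eq, mem_inter_iff]

/-- **Bourgain's lemma**: every nonempty relatively weakly open subset of the closed unit ball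
contains a convex combination of slices. -/
lemma bourgain [Nontrivial X] [CompleteSpace X] {W : Set X} (hW : IsRelWeakOpen X W) :
    ∃ (n : ℕ) (l : Fin n → ℝ) (S : Fin n → Set X),
      (∀ i, 0 ≤ l i) ∧ (∑ i, l i) = 1 ∧ (∀ i, IsSlice X (S i)) ∧ comboSet X l S ⊆ W := by
  classical
  obtain ⟨⟨x₀, hx₀⟩, U, hUopen, rfl⟩ := hW
  obtain ⟨I, δ, hδ, hbasic⟩ := exists_basic_nbhd U hUopen x₀ hx₀.2
  set T : X →L[ℝ] (↥I → ℝ) := ContinuousLinearMap.pi (fun f : ↥I => (f : X →L[ℝ] ℝ)) with hT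
  set K : Set (↥I → ℝ) := closure (T '' closedBall (0 : X) 1) with hK
  have hKsub : K ⊆ closedBall 0 ‖T‖ := by
    rw [hK]
    apply closure_minimal _ isClosed_closedBall
    rintro _ ⟨y, hy, rfl⟩
    rw [mem_closedBall_zero_iff]
    calc ‖T y‖ ≤ ‖T‖ * ‖y‖ := T.le_opNorm y
      _ ≤ ‖T‖ * 1 := mul_le_mul_of_nonneg_left (by simpa using hy) (norm_nonneg _)
      _ = ‖T‖ := mul_one _
  have hKc : IsCompact K := by
    exact IsCompact.of_isClosed_subset (isCompact_closedBall 0 ‖T‖) isClosed_closure hKsub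
  have hKconv : Convex ℝ K :=
    (((convex_closedBall (0 : X) 1).linear_image T.toLinearMap)).closure
  have hpK : T x₀ ∈ K := subset_closure ⟨x₀, hx₀.1, rfl⟩
  obtain ⟨N, μ, g, s, hμ0, hμ1, hne, hmain⟩ := finDimCore hKc hKconv hpK hδ
  set S : Fin N → Set X := fun j => {y ∈ closedBall (0 : X) 1 | s j < ((g j).comp T) y} with hS
  refine ⟨N, μ, S, hμ0, hμ1, ?_, ?_⟩
  · intro j
    apply isSlice_of_exists
    obtain ⟨k, hkK, hks⟩ := hne j
    obtain ⟨z, hz1, hz2⟩ := mem_closure_iff.mp hkK {z | s j < g j z}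
      (isOpen_lt continuous_const (g j).continuous) hks
    obtain ⟨y, hy, rfl⟩ := hz2
    exact ⟨y, by simpa using hy, hz1⟩
  · rintro z ⟨w, hw, rfl⟩
    have hwball : ∀ j, w j ∈ closedBall (0 : X) 1 := fun j => (hw j).1
    constructor
    · rw [mem_closedBall_zero_iff]
      calc ‖∑ j, μ j • w j‖ ≤ ∑ j, ‖μ j • w j‖ := norm_sum_le _ _
        _ ≤ ∑ j, μ j := by
            refine Finset.sum_le_sum fun j _ => ?_
            rw [norm_smul, Real.norm_of_nonneg (hμ0 j)]
            calc μ j * ‖w j‖ ≤ μ j * 1 :=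
                  mul_le_mul_of_nonneg_left (by simpa using hwball j) (hμ0 j)
              _ = μ j := mul_one _
        _ = 1 := hμ1
    · apply hbasic
      intro f hf
      have hmem : ∀ j, T (w j) ∈ K := fun j => subset_closure ⟨w j, hwball j, rfl⟩
      have hslice : ∀ j, s j < g j (T (w j)) := fun j => (hw j).2
      have hlt := hmain (fun j => T (w j)) hmem hslice
      have hTz : ∑ j, μ j • T (w j) = T (∑ j, μ j • w j) := by
        rw [map_sum]
        simp only [map_smul]
      rw [hTz] at hlt
      have hcoord := norm_le_pi_norm (T (∑ j, μ j • w j) - T x₀) ⟨f, hf⟩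
      have hval : (T (∑ j, μ j • w j) - T x₀) ⟨f, hf⟩
          = f (∑ j, μ j • w j) - f x₀ := rfl
      rw [hval] at hcoord
      calc |f (∑ j, μ j • w j) - f x₀| = ‖f (∑ j, μ j • w j) - f x₀‖ := rfl
        _ ≤ ‖T (∑ j, μ j • w j) - T x₀‖ := hcoord
        _ < δ := hlt

/-- Flattening a convex combination of convex combinations. -/
lemma combo_flatten {n : ℕ} (l : Fin n → ℝ) (W : Fin n → Set X)
    (hl0 : ∀ i, 0 ≤ l i) (hl1 : ∑ i, l i = 1)
    (m : Fin n → ℕ) (μ : ∀ i, Fin (m i) → ℝ) (S : ∀ i, Fin (m i) → Set X)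
    (hμ0 : ∀ i j, 0 ≤ μ i j) (hμ1 : ∀ i, ∑ j, μ i j = 1)
    (hsub : ∀ i, comboSet X (μ i) (S i) ⊆ W i) :
    ∃ (N : ℕ) (L : Fin N → ℝ) (T : Fin N → Set X), (∀ k, 0 ≤ L k) ∧ ∑ k, L k = 1 ∧
      (∀ k, ∃ i j, T k = S i j) ∧ comboSet X L T ⊆ comboSet X l W := by
  classical
  set σ := (Σ i : Fin n, Fin (m i))
  set e : σ ≃ Fin (Fintype.card σ) := Fintype.equivFin σ with he
  set N := Fintype.card σ
  set G : σ → ℝ := fun p => l p.1 * μ p.1 p.2 with hG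
  refine ⟨N, fun k => G (e.symm k), fun k => S (e.symm k).1 (e.symm k).2,
    fun k => mul_nonneg (hl0 _) (hμ0 _ _), ?_, fun k => ⟨_, _, rfl⟩, ?_⟩
  · rw [Equiv.sum_comp e.symm G, hG]
    rw [← Finset.univ_sigma_univ, Finset.sum_sigma]
    simp only [← Finset.mul_sum, hμ1, mul_one]
    exact hl1
  · rintro z ⟨w, hw, rfl⟩
    refine ⟨fun i => ∑ j, μ i j • w (e ⟨i, j⟩), fun i => ?_, ?_⟩
    · apply hsub i
      refine ⟨fun j => w (e ⟨i, j⟩), fun j => ?_, rfl⟩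
      have h : w (e ⟨i, j⟩) ∈ (fun q : σ => S q.1 q.2) (e.symm (e ⟨i, j⟩)) :=
        hw (e ⟨i, j⟩)
      rw [Equiv.symm_apply_apply] at h
      exact h
    · have hstep : ∑ k, G (e.symm k) • w k = ∑ p : σ, G p • w (e p) := by
        rw [← Equiv.sum_comp e.symm (fun p => G p • w (e p))]
        refine Finset.sum_congr rfl fun k _ => ?_
        rw [Equiv.apply_symm_apply]
      rw [hstep, ← Finset.univ_sigma_univ, Finset.sum_sigma]
      refine Finset.sum_congr rfl fun i _ => ?_
      rw [Finset.smul_sum]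
      refine Finset.sum_congr rfl fun j _ => ?_
      rw [hG, mul_smul]

theorem stmt_1 (X : Type*) [NormedAddCommGroup X] [NormedSpace ℝ X] [CompleteSpace X]
    [Nontrivial X] :
    Tcc X =
      sInf {r : ℝ | 0 < r ∧ ∃ x : X, ‖x‖ = 1 ∧ ∃ (n : ℕ) (l : Fin n → ℝ) (S : Fin n → Set X),
        (∀ i, 0 ≤ l i) ∧ (∑ i, l i) = 1 ∧ (∀ i, IsSlice X (S i)) ∧
        comboSet X l S ⊆ closedBall x r} := by
  rw [Tcc]
  congr 1
  ext r
  constructor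
  · rintro ⟨hr, x, hx, n, l, W, hl0, hl1, hWopen, hsub⟩
    choose m μ S hμ0 hμ1 hSslice hSsub using fun i => bourgain (hWopen i)
    obtain ⟨N, L, T, hL0, hL1, hTS, hTsub⟩ :=
      combo_flatten l W hl0 hl1 m μ S hμ0 hμ1 hSsub
    refine ⟨hr, x, hx, N, L, T, hL0, hL1, fun k => ?_, hTsub.trans hsub⟩
    obtain ⟨i, j, hk⟩ := hTS k
    rw [hk]
    exact hSslice i j
  · rintro ⟨hr, x, hx, n, l, S, hl0, hl1, hSslice, hsub⟩
    exact ⟨hr, x, hx, n, l, S, hl0, hl1,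
      fun i => isRelWeakOpen_of_isSlice (hSslice i), hsub⟩
end
end

section
/- Let X and Y be real Banach spaces, let N be an absolute normalized norm on ℝ², and let γ > 0 be such that N(a,b) ≥ γ(|a| + |b|) for all (a,b) ∈ ℝ². Then 𝒯^s(X ⊕_N Y) ≥ 2γ(min{𝒯^s(X), 𝒯^s(Y)} − 1). -/
open Metric Set

noncomputable section

variable (X : Type*) [NormedAddCommGroup X] [NormedSpace ℝ X]

section MyAux

variable {W : Type*} [NormedAddCommGroup W] [NormedSpace ℝ W]

lemma myTs_bddBelow : BddBelow {r : ℝ | 0 < r ∧ ∃ x : W, ‖x‖ = 1 ∧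
    ∃ S : Set W, IsSlice W S ∧ S ⊆ closedBall x r} :=
  ⟨0, fun r hr => le_of_lt hr.1⟩

lemma myexists_slice_pt (φ : W →L[ℝ] ℝ) {c : ℝ} (h : c < ‖φ‖) :
    ∃ x : W, ‖x‖ ≤ 1 ∧ c < φ x := by
  obtain ⟨x, hx1, hx2⟩ := φ.exists_lt_apply_of_lt_opNorm h
  rcases le_or_gt 0 (φ x) with h0 | h0
  · exact ⟨x, hx1.le, by rwa [Real.norm_eq_abs, abs_of_nonneg h0] at hx2⟩
  · refine ⟨-x, by simpa using hx1.le, ?_⟩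
    rw [map_neg]
    rwa [Real.norm_eq_abs, abs_of_neg h0] at hx2

lemma mytwo_mem [Nontrivial W] : (2:ℝ) ∈ {r : ℝ | 0 < r ∧ ∃ x : W, ‖x‖ = 1 ∧
    ∃ S : Set W, IsSlice W S ∧ S ⊆ closedBall x r} := by
  obtain ⟨v, hv⟩ := exists_ne (0 : W)
  obtain ⟨φ, hφ, -⟩ := exists_dual_vector ℝ v (norm_ne_zero_iff.2 hv)
  refine ⟨by norm_num, ‖v‖⁻¹ • v, ?_, sliceSet W φ 1, ⟨φ, hφ, 1, one_pos, rfl⟩, ?_⟩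
  · rw [norm_smul, Real.norm_eq_abs, abs_inv, abs_of_nonneg (norm_nonneg v),
      inv_mul_cancel₀ (norm_ne_zero_iff.2 hv)]
  · intro y hy
    have hy1 : ‖y‖ ≤ 1 := mem_closedBall_zero_iff.1 hy.1
    have hu : ‖‖v‖⁻¹ • v‖ = 1 := by
      rw [norm_smul, Real.norm_eq_abs, abs_inv, abs_of_nonneg (norm_nonneg v),
        inv_mul_cancel₀ (norm_ne_zero_iff.2 hv)]
    rw [mem_closedBall, dist_eq_norm]
    calc ‖y - ‖v‖⁻¹ • v‖ ≤ ‖y‖ + ‖‖v‖⁻¹ • v‖ := norm_sub_le _ _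
      _ ≤ 2 := by rw [hu]; linarith

lemma myTs_le_two [Nontrivial W] : Ts W ≤ 2 :=
  csInf_le myTs_bddBelow mytwo_mem

lemma myfar {ρ : ℝ} (h0 : 0 < ρ) (hlt : ρ < Ts W) (u : W) (hu : ‖u‖ = 1)
    {φ : W →L[ℝ] ℝ} (hφ : ‖φ‖ = 1) {β : ℝ} (hβ : 0 < β) :
    ∃ x ∈ sliceSet W φ β, ρ < ‖x - u‖ := by
  by_contra hcon
  push_neg at hcon
  have : Ts W ≤ ρ := csInf_le myTs_bddBelow ⟨h0, u, hu, sliceSet W φ β,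
    ⟨φ, hφ, β, hβ, rfl⟩,
    fun x hx => by rw [mem_closedBall, dist_eq_norm]; exact hcon x hx⟩
  linarith

lemma mydist_bd {x w : W} {cc pp ρ : ℝ} (hc : 0 ≤ cc) (hx : ‖x‖ ≤ 1)
    (hw : ‖w‖ = pp) (hp : 0 < pp) (hρ : 0 ≤ ρ)
    (hfar : ρ + 1 < ‖x - pp⁻¹ • w‖) :
    ρ * max cc pp + min cc pp < ‖cc • x - w‖ := by
  set u := pp⁻¹ • w with hu_def
  have hu : ‖u‖ = 1 := by
    rw [hu_def, norm_smul, Real.norm_eq_abs, abs_inv, abs_of_pos hp, hw,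
      inv_mul_cancel₀ hp.ne']
  have hwu : w = pp • u := by
    rw [hu_def, smul_smul, mul_inv_cancel₀ hp.ne', one_smul]
  have b1 : cc * ‖x - u‖ - |cc - pp| ≤ ‖cc • x - w‖ := by
    have h2 : ‖cc • (x - u)‖ ≤ ‖cc • x - w‖ + ‖(cc - pp) • u‖ := by
      calc ‖cc • (x - u)‖ = ‖(cc • x - w) - (cc - pp) • u‖ := by
            rw [hwu]; congr 1; rw [smul_sub, sub_smul]; abel
        _ ≤ ‖cc • x - w‖ + ‖(cc - pp) • u‖ := norm_sub_le _ _
    rw [norm_smul, Real.norm_eq_abs, abs_of_nonneg hc, norm_smul,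
      Real.norm_eq_abs, hu, mul_one] at h2
    linarith
  have b2 : pp * ‖x - u‖ - |cc - pp| ≤ ‖cc • x - w‖ := by
    have h2 : ‖pp • (x - u)‖ ≤ ‖cc • x - w‖ + ‖(cc - pp) • x‖ := by
      calc ‖pp • (x - u)‖ = ‖(cc • x - w) - (cc - pp) • x‖ := by
            rw [hwu]; congr 1; rw [smul_sub, sub_smul]; abel
        _ ≤ ‖cc • x - w‖ + ‖(cc - pp) • x‖ := norm_sub_le _ _
    have h5 : ‖(cc - pp) • x‖ ≤ |cc - pp| := by
      rw [norm_smul, Real.norm_eq_abs]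
      exact mul_le_of_le_one_right (abs_nonneg _) hx
    rw [norm_smul, Real.norm_eq_abs, abs_of_pos hp] at h2
    linarith
  rcases le_total cc pp with h | h
  · rw [max_eq_right h, min_eq_left h]
    have habs : |cc - pp| = pp - cc := by
      rw [abs_sub_comm]; exact abs_of_nonneg (by linarith)
    have hm := mul_lt_mul_of_pos_left hfar hp
    rw [habs] at b2
    nlinarith
  · rw [max_eq_left h, min_eq_right h]
    have hcpos : 0 < cc := lt_of_lt_of_le hp h
    have habs : |cc - pp| = cc - pp := abs_of_nonneg (by linarith)
    have hm := mul_lt_mul_of_pos_left hfar hcpos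
    rw [habs] at b1
    nlinarith

end MyAux

set_option maxHeartbeats 2000000 in
theorem stmt_3 (X Y : Type*) [NormedAddCommGroup X] [NormedSpace ℝ X]
    [CompleteSpace X] [Nontrivial X] [NormedAddCommGroup Y] [NormedSpace ℝ Y]
    [CompleteSpace Y] [Nontrivial Y]
    (N : ℝ → ℝ → ℝ)
    (N_triangle : ∀ a b c d : ℝ, N (a + c) (b + d) ≤ N a b + N c d)
    (N_homog : ∀ t a b : ℝ, N (t * a) (t * b) = |t| * N a b)
    (N_pos : ∀ a b : ℝ, N a b = 0 → a = 0 ∧ b = 0)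
    (N_abs : ∀ a b : ℝ, N a b = N |a| |b|)
    (N_norm₁ : N 1 0 = 1) (N_norm₂ : N 0 1 = 1)
    (Z : Type*) [NormedAddCommGroup Z] [NormedSpace ℝ Z] [CompleteSpace Z]
    (e : Z ≃ₗ[ℝ] X × Y) (hZ : ∀ z : Z, ‖z‖ = N ‖(e z).1‖ ‖(e z).2‖)
    (γ : ℝ) (hγ : 0 < γ) (hγN : ∀ a b : ℝ, γ * (|a| + |b|) ≤ N a b) :
    2 * γ * (min (Ts X) (Ts Y) - 1) ≤ Ts Z := by
  classical
  -- ## Basic facts about the norm `N`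
  have hNneg : ∀ a b : ℝ, N (-a) (-b) = N a b := by
    intro a b
    have h := N_homog (-1) a b
    norm_num at h
    exact h
  have hN00 : N 0 0 = 0 := by
    have h := N_homog 0 0 0
    norm_num at h
    exact h
  have hNnn : ∀ a b : ℝ, 0 ≤ N a b := by
    intro a b
    have h1 := N_triangle a b (-a) (-b)
    rw [add_neg_cancel, add_neg_cancel, hN00, hNneg] at h1
    linarith
  have hNt0 : ∀ t : ℝ, N t 0 = |t| := by
    intro t
    have h := N_homog t 1 0
    rw [mul_one, mul_zero, N_norm₁, mul_one] at h
    exact h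
  have hN0t : ∀ t : ℝ, N 0 t = |t| := by
    intro t
    have h := N_homog t 0 1
    rw [mul_one, mul_zero, N_norm₂, mul_one] at h
    exact h
  have hmono1 : ∀ a b c : ℝ, 0 ≤ a → a ≤ c → N a b ≤ N c b := by
    intro a b c ha hac
    rcases eq_or_lt_of_le (ha.trans hac) with hc | hc
    · obtain rfl : a = 0 := le_antisymm (hac.trans hc.symm.le) ha
      rw [← hc]
    · have hNc : N (-c) b = N c b := by
        rw [N_abs (-c) b, abs_neg, ← N_abs]
      set t := (a + c) / (2 * c) with ht_def
      have h2c : (0:ℝ) < 2 * c := by linarith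
      have ht0 : 0 ≤ t := div_nonneg (by linarith) h2c.le
      have ht1 : t ≤ 1 := (div_le_one h2c).2 (by linarith)
      have hta : t * c + (1 - t) * (-c) = a := by
        rw [ht_def]; field_simp; ring
      have htb : t * b + (1 - t) * b = b := by ring
      calc N a b = N (t * c + (1 - t) * (-c)) (t * b + (1 - t) * b) := by rw [hta, htb]
        _ ≤ N (t * c) (t * b) + N ((1 - t) * (-c)) ((1 - t) * b) := N_triangle _ _ _ _
        _ = t * N c b + (1 - t) * N (-c) b := by
            rw [N_homog, N_homog, abs_of_nonneg ht0, abs_of_nonneg (by linarith : (0:ℝ) ≤ 1 - t)]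
        _ = N c b := by rw [hNc]; ring
  have hmono2 : ∀ a b d : ℝ, 0 ≤ b → b ≤ d → N a b ≤ N a d := by
    intro a b d hb hbd
    rcases eq_or_lt_of_le (hb.trans hbd) with hd | hd
    · obtain rfl : b = 0 := le_antisymm (hbd.trans hd.symm.le) hb
      rw [← hd]
    · have hNd : N a (-d) = N a d := by
        rw [N_abs a (-d), abs_neg, ← N_abs]
      set t := (b + d) / (2 * d) with ht_def
      have h2d : (0:ℝ) < 2 * d := by linarith
      have ht0 : 0 ≤ t := div_nonneg (by linarith) h2d.le
      have ht1 : t ≤ 1 := (div_le_one h2d).2 (by linarith)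
      have htb : t * d + (1 - t) * (-d) = b := by
        rw [ht_def]; field_simp; ring
      have hta : t * a + (1 - t) * a = a := by ring
      calc N a b = N (t * a + (1 - t) * a) (t * d + (1 - t) * (-d)) := by rw [hta, htb]
        _ ≤ N (t * a) (t * d) + N ((1 - t) * a) ((1 - t) * (-d)) := N_triangle _ _ _ _
        _ = t * N a d + (1 - t) * N a (-d) := by
            rw [N_homog, N_homog, abs_of_nonneg ht0, abs_of_nonneg (by linarith : (0:ℝ) ≤ 1 - t)]
        _ = N a d := by rw [hNd]; ring
  have hmono : ∀ a b c d : ℝ, 0 ≤ a → a ≤ c → 0 ≤ b → b ≤ d → N a b ≤ N c d :=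
    fun a b c d ha hac hb hbd => (hmono1 a b c ha hac).trans (hmono2 c b d hb hbd)
  have hNsum : ∀ a b : ℝ, N a b ≤ |a| + |b| := by
    intro a b
    have h := N_triangle a 0 0 b
    rw [add_zero, zero_add, hNt0, hN0t] at h
    exact h
  have hNfst : ∀ a b : ℝ, |a| ≤ N a b := by
    intro a b
    have h1 : N |a| 0 ≤ N |a| |b| := hmono2 _ _ _ le_rfl (abs_nonneg b)
    rw [hNt0, abs_abs] at h1
    rw [N_abs]
    exact h1
  have hNsnd : ∀ a b : ℝ, |b| ≤ N a b := by
    intro a b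
    have h1 : N 0 |b| ≤ N |a| |b| := hmono1 _ _ _ le_rfl (abs_nonneg a)
    rw [hN0t, abs_abs] at h1
    rw [N_abs]
    exact h1
  -- ## Nontriviality of `Z` and the reduction to a fixed `r`
  haveI : Nontrivial Z := by
    obtain ⟨v, hv⟩ := exists_ne (0 : X)
    refine ⟨e.symm (v, 0), 0, fun hcc => hv ?_⟩
    have h2 : ((v, (0:Y)) : X × Y) = 0 := by
      apply e.symm.injective
      rw [hcc, map_zero]
    exact congrArg Prod.fst h2
  refine le_csInf ⟨2, mytwo_mem⟩ ?_
  rintro r ⟨hr0, z0, hz0, S, ⟨f, hf, α, hα, rfl⟩, hSub⟩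
  by_contra hcon
  push_neg at hcon
  set ρ := r / (2 * γ) with hρ_def
  have h2γ : 0 < 2 * γ := by linarith
  have hρr : 2 * γ * ρ = r := by
    rw [hρ_def]; field_simp
  have hρ0 : 0 < ρ := div_pos hr0 h2γ
  have hmlt : ρ + 1 < min (Ts X) (Ts Y) := by nlinarith
  have hX : ρ + 1 < Ts X := lt_of_lt_of_le hmlt (min_le_left _ _)
  have hY : ρ + 1 < Ts Y := lt_of_lt_of_le hmlt (min_le_right _ _)
  have hρ1 : ρ < 1 := by
    have h2 : Ts X ≤ 2 := myTs_le_two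
    linarith
  set η := 1 - ρ with hη_def
  have hη0 : 0 < η := by rw [hη_def]; linarith
  have hη1 : η ≤ 1 := by rw [hη_def]; linarith
  clear_value ρ η
  obtain ⟨δ, hδ_def⟩ : ∃ t, t = min (α / 3) (η ^ 2 / 6) := ⟨_, rfl⟩
  have hδ0 : 0 < δ := by rw [hδ_def]; exact lt_min (by linarith) (by positivity)
  have hδα : 3 * δ ≤ α := by
    have h := min_le_left (α / 3) (η ^ 2 / 6)
    rw [← hδ_def] at h; linarith
  have hδη : 6 * δ ≤ η ^ 2 := by
    have h := min_le_right (α / 3) (η ^ 2 / 6)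
    rw [← hδ_def] at h; linarith
  have hδ1 : δ < 1 := by nlinarith
  -- ## The decomposition of `f` and the norms on `Z`
  have hsymm_norm : ∀ (x : X) (y : Y), ‖e.symm (x, y)‖ = N ‖x‖ ‖y‖ := by
    intro x y
    rw [hZ (e.symm (x, y)), e.apply_symm_apply]
  set x0 := (e z0).1 with hx0_def
  set y0 := (e z0).2 with hy0_def
  have hpq : N ‖x0‖ ‖y0‖ = 1 := by rw [← hZ z0, hz0]
  have hp1 : ‖x0‖ ≤ 1 := by
    have h := hNfst ‖x0‖ ‖y0‖
    rwa [abs_of_nonneg (norm_nonneg _), hpq] at h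
  have hq1 : ‖y0‖ ≤ 1 := by
    have h := hNsnd ‖x0‖ ‖y0‖
    rwa [abs_of_nonneg (norm_nonneg _), hpq] at h
  have hpq1 : 1 ≤ ‖x0‖ + ‖y0‖ := by
    have h := hNsum ‖x0‖ ‖y0‖
    rwa [hpq, abs_of_nonneg (norm_nonneg _), abs_of_nonneg (norm_nonneg _)] at h
  set glin : X →ₗ[ℝ] ℝ := f.toLinearMap ∘ₗ (e.symm.toLinearMap ∘ₗ LinearMap.inl ℝ X Y)
    with hglin_def
  have hgbound : ∀ x : X, ‖glin x‖ ≤ 1 * ‖x‖ := by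
    intro x
    have h1 : glin x = f (e.symm (x, 0)) := rfl
    rw [h1, one_mul]
    calc ‖f (e.symm (x, 0))‖ ≤ ‖f‖ * ‖e.symm (x, 0)‖ := f.le_opNorm _
      _ = ‖x‖ := by
          rw [hf, one_mul, hsymm_norm, norm_zero, hNt0, abs_of_nonneg (norm_nonneg _)]
  set g : X →L[ℝ] ℝ := glin.mkContinuous 1 hgbound with hg_def
  have hg_apply : ∀ x : X, g x = f (e.symm (x, 0)) := fun x => rfl
  set hlin : Y →ₗ[ℝ] ℝ := f.toLinearMap ∘ₗ (e.symm.toLinearMap ∘ₗ LinearMap.inr ℝ X Y)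
    with hhlin_def
  have hhbound : ∀ y : Y, ‖hlin y‖ ≤ 1 * ‖y‖ := by
    intro y
    have h1 : hlin y = f (e.symm (0, y)) := rfl
    rw [h1, one_mul]
    calc ‖f (e.symm (0, y))‖ ≤ ‖f‖ * ‖e.symm (0, y)‖ := f.le_opNorm _
      _ = ‖y‖ := by
          rw [hf, one_mul, hsymm_norm, norm_zero, hN0t, abs_of_nonneg (norm_nonneg _)]
  set h : Y →L[ℝ] ℝ := hlin.mkContinuous 1 hhbound with hh_def
  have hh_apply : ∀ y : Y, h y = f (e.symm (0, y)) := fun y => rfl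
  set A := ‖g‖ with hA_def
  set B := ‖h‖ with hB_def
  have hA1 : A ≤ 1 := glin.mkContinuous_norm_le zero_le_one hgbound
  have hB1 : B ≤ 1 := hlin.mkContinuous_norm_le zero_le_one hhbound
  have hA0 : 0 ≤ A := norm_nonneg _
  have hB0 : 0 ≤ B := norm_nonneg _
  have hfsplit : ∀ z : Z, f z = g (e z).1 + h (e z).2 := by
    intro z
    rw [hg_apply, hh_apply, ← map_add f, ← map_add e.symm]
    have h2 : (((e z).1, (0:Y)) : X × Y) + ((0:X), (e z).2) = e z := by
      rw [Prod.mk_add_mk, add_zero, zero_add]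
    rw [h2, e.symm_apply_apply]
  have hgle : ∀ x : X, g x ≤ A * ‖x‖ := fun x =>
    (le_abs_self _).trans (by simpa [Real.norm_eq_abs] using g.le_opNorm x)
  have hhle : ∀ y : Y, h y ≤ B * ‖y‖ := fun y =>
    (le_abs_self _).trans (by simpa [Real.norm_eq_abs] using h.le_opNorm y)
  clear_value g h A B
  -- ## Choice of the coefficients `a`, `b`
  obtain ⟨z1, hz1n, hz1f⟩ := myexists_slice_pt f (show (1:ℝ) - δ < ‖f‖ by rw [hf]; linarith)
  set c := N ‖(e z1).1‖ ‖(e z1).2‖ with hc_def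
  have hcle : c ≤ 1 := by rw [hc_def, ← hZ z1]; exact hz1n
  have hc0 : 0 < c := by
    rcases (hNnn ‖(e z1).1‖ ‖(e z1).2‖).lt_or_eq with hlt | heq
    · exact hlt
    · exfalso
      obtain ⟨h1, h2⟩ := N_pos _ _ heq.symm
      have hzero : f z1 = 0 := by
        rw [hfsplit z1, norm_eq_zero.1 h1, norm_eq_zero.1 h2, map_zero, map_zero, add_zero]
      rw [hzero] at hz1f
      linarith
  set a := ‖(e z1).1‖ / c with ha_def
  set b := ‖(e z1).2‖ / c with hb_def
  have ha0 : 0 ≤ a := div_nonneg (norm_nonneg _) hc0.le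
  have hb0 : 0 ≤ b := div_nonneg (norm_nonneg _) hc0.le
  have hNab : N a b = 1 := by
    rw [ha_def, hb_def, div_eq_inv_mul, div_eq_inv_mul, N_homog, abs_inv,
      abs_of_pos hc0, ← hc_def, inv_mul_cancel₀ hc0.ne']
  have hab1 : a ≤ 1 := by
    have h1 := hNfst a b
    rwa [abs_of_nonneg ha0, hNab] at h1
  have hbb1 : b ≤ 1 := by
    have h1 := hNsnd a b
    rwa [abs_of_nonneg hb0, hNab] at h1
  have habsum : 1 ≤ a + b := by
    have h1 := hNsum a b
    rw [hNab, abs_of_nonneg ha0, abs_of_nonneg hb0] at h1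
    linarith
  have hABab' : 1 - δ < a * A + b * B := by
    have h1 : f z1 = g (e z1).1 + h (e z1).2 := hfsplit z1
    have h2 : g (e z1).1 ≤ A * ‖(e z1).1‖ := hgle _
    have h3 : h (e z1).2 ≤ B * ‖(e z1).2‖ := hhle _
    have h5 : a * A + b * B = (A * ‖(e z1).1‖ + B * ‖(e z1).2‖) / c := by
      rw [ha_def, hb_def]; field_simp
    rw [h5, lt_div_iff₀ hc0]
    have h6 : (1 - δ) * c ≤ 1 - δ :=
      mul_le_of_le_one_right (by linarith : (0:ℝ) ≤ 1 - δ) hcle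
    linarith
  clear_value c a b
  have hABab : 1 - δ < a * A + b * B := hABab'
  clear hABab' hc_def ha_def hb_def hcle hc0 hz1f hz1n
  -- ## The master inequality
  have master : ∀ (x : X) (y : Y) (cx cy : ℝ), ‖x‖ ≤ 1 → ‖y‖ ≤ 1 → 0 ≤ cx → 0 ≤ cy →
      N cx cy ≤ 1 → 1 - α < cx * g x + cy * h y →
      γ * (‖cx • x - x0‖ + ‖cy • y - y0‖) ≤ r := by
    intro x y cx cy hx hy hcx hcy hN1 hαf
    set z := e.symm (cx • x, cy • y) with hz_def
    have hez : e z = (cx • x, cy • y) := by rw [hz_def, e.apply_symm_apply]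
    have hzn : ‖z‖ ≤ 1 := by
      rw [hz_def, hsymm_norm, norm_smul, norm_smul, Real.norm_eq_abs, Real.norm_eq_abs,
        abs_of_nonneg hcx, abs_of_nonneg hcy]
      exact (hmono _ _ _ _ (mul_nonneg hcx (norm_nonneg x))
        (mul_le_of_le_one_right hcx hx) (mul_nonneg hcy (norm_nonneg y))
        (mul_le_of_le_one_right hcy hy)).trans hN1
    have hfz : f z = cx * g x + cy * h y := by
      rw [hfsplit z, hez, map_smul, map_smul, smul_eq_mul, smul_eq_mul]
    have hmem : z ∈ sliceSet Z f α := ⟨mem_closedBall_zero_iff.2 hzn, by rw [hfz]; exact hαf⟩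
    have hball := hSub hmem
    rw [mem_closedBall, dist_eq_norm] at hball
    have h1 : (e (z - z0)).1 = cx • x - x0 := by rw [map_sub, hez]; rfl
    have h2 : (e (z - z0)).2 = cy • y - y0 := by rw [map_sub, hez]; rfl
    have hnz : ‖z - z0‖ = N ‖cx • x - x0‖ ‖cy • y - y0‖ := by
      rw [hZ (z - z0), h1, h2]
    rw [hnz] at hball
    have h3 := hγN ‖cx • x - x0‖ ‖cy • y - y0‖
    rw [abs_of_nonneg (norm_nonneg _), abs_of_nonneg (norm_nonneg _)] at h3
    linarith
  have hsum2ρ : ∀ dX dY : ℝ, γ * (dX + dY) ≤ r → dX + dY ≤ 2 * ρ := by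
    intro dX dY hle
    have h2 : γ * (2 * ρ) = r := by rw [← hρr]; ring
    exact le_of_mul_le_mul_left (by rw [h2]; exact hle) hγ
  -- ## Case analysis
  rcases eq_or_lt_of_le hA0 with hAz | hApos
  · -- Case `A = 0`
    have hBge : 1 - δ < B := by
      have h1 := hABab
      rw [← hAz] at h1
      have h2 : b * B ≤ B := mul_le_of_le_one_left hB0 hbb1
      linarith only [h1, h2]
    have hBpos : 0 < B := by linarith only [hBge, hδ1]
    have hφn : ‖B⁻¹ • h‖ = 1 := by
      have hsm := norm_smul B⁻¹ h
      rw [hsm, Real.norm_eq_abs, abs_inv, abs_of_pos hBpos, ← hB_def,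
        inv_mul_cancel₀ hBpos.ne']
    have hslice : ∀ y, y ∈ sliceSet Y (B⁻¹ • h) (δ / B) → ‖y‖ ≤ 1 ∧ B - δ < h y := by
      rintro y ⟨hy1, hy2⟩
      refine ⟨mem_closedBall_zero_iff.1 hy1, ?_⟩
      have hy2' : 1 - δ / B < B⁻¹ * h y := by
        simpa [ContinuousLinearMap.smul_apply, smul_eq_mul] using hy2
      have h3 := mul_lt_mul_of_pos_left hy2' hBpos
      have e1 : B * (1 - δ / B) = B - δ := by field_simp
      have e2 : B * (B⁻¹ * h y) = h y := by field_simp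
      rw [e1, e2] at h3
      exact h3
    rcases eq_or_lt_of_le (norm_nonneg y0) with hq0 | hqpos
    · -- `‖y0‖ = 0`, hence `‖x0‖ = 1`
      have hy00 : y0 = 0 := norm_eq_zero.1 hq0.symm
      have hp1' : ‖x0‖ = 1 := by
        rw [← hq0, hNt0] at hpq
        rwa [abs_of_nonneg (norm_nonneg _)] at hpq
      obtain ⟨y, hy1, hy2⟩ := myexists_slice_pt h
        (show B - δ < ‖h‖ by rw [← hB_def]; linarith only [hδ0])
      have hyn : 1 - 2 * δ < ‖y‖ := by
        have h1 := hhle y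
        nlinarith only [h1, hy2, hBge, hB1, hB0, norm_nonneg y]
      have hmm := master 0 y 0 1 (by simp) hy1 le_rfl zero_le_one (le_of_eq N_norm₂) (by
        have hh2 : (0:ℝ) * g 0 + 1 * h y = h y := by ring
        rw [hh2]; linarith only [hy2, hBge, hδα, hδ0])
      rw [zero_smul, zero_sub, norm_neg, one_smul, hy00, sub_zero] at hmm
      have hs := hsum2ρ _ _ hmm
      have hη2 : η ^ 2 ≤ η := by nlinarith only [hη0, hη1]
      linarith only [hs, hp1', hyn, hδη, hη2, hη_def, hη0]
    · -- `‖y0‖ > 0`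
      obtain ⟨y, hymem, hyfar⟩ := myfar (by linarith only [hρ0] : (0:ℝ) < ρ + 1) hY
        (‖y0‖⁻¹ • y0)
        (by rw [norm_smul, Real.norm_eq_abs, abs_inv, abs_of_pos hqpos,
          inv_mul_cancel₀ hqpos.ne']) hφn (div_pos hδ0 hBpos)
      obtain ⟨hy1, hy2⟩ := hslice y hymem
      have hdY := mydist_bd zero_le_one hy1 rfl hqpos hρ0.le hyfar
      rw [max_eq_left hq1, min_eq_right hq1] at hdY
      have hmm := master 0 y 0 1 (by simp) hy1 le_rfl zero_le_one (le_of_eq N_norm₂) (by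
        have hh2 : (0:ℝ) * g 0 + 1 * h y = h y := by ring
        rw [hh2]; linarith only [hy2, hBge, hδα, hδ0])
      rw [zero_smul, zero_sub, norm_neg] at hmm
      have hs := hsum2ρ _ _ hmm
      linarith only [hs, hdY, hpq1, hρ1]
  · rcases eq_or_lt_of_le hB0 with hBz | hBpos
    · -- Case `B = 0`
      have hAge : 1 - δ < A := by
        have h1 := hABab
        rw [← hBz] at h1
        have h2 : a * A ≤ A := mul_le_of_le_one_left hA0 hab1
        linarith only [h1, h2]
      have hφn : ‖A⁻¹ • g‖ = 1 := by
        have hsm := norm_smul A⁻¹ g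
        rw [hsm, Real.norm_eq_abs, abs_inv, abs_of_pos hApos, ← hA_def,
          inv_mul_cancel₀ hApos.ne']
      have hslice : ∀ x, x ∈ sliceSet X (A⁻¹ • g) (δ / A) → ‖x‖ ≤ 1 ∧ A - δ < g x := by
        rintro x ⟨hx1, hx2⟩
        refine ⟨mem_closedBall_zero_iff.1 hx1, ?_⟩
        have hx2' : 1 - δ / A < A⁻¹ * g x := by
          simpa [ContinuousLinearMap.smul_apply, smul_eq_mul] using hx2
        have h3 := mul_lt_mul_of_pos_left hx2' hApos
        have e1 : A * (1 - δ / A) = A - δ := by field_simp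
        have e2 : A * (A⁻¹ * g x) = g x := by field_simp
        rw [e1, e2] at h3
        exact h3
      rcases eq_or_lt_of_le (norm_nonneg x0) with hp0 | hppos
      · -- `‖x0‖ = 0`, hence `‖y0‖ = 1`
        have hx00 : x0 = 0 := norm_eq_zero.1 hp0.symm
        have hq1' : ‖y0‖ = 1 := by
          rw [← hp0, hN0t] at hpq
          rwa [abs_of_nonneg (norm_nonneg _)] at hpq
        obtain ⟨x, hx1, hx2⟩ := myexists_slice_pt g
          (show A - δ < ‖g‖ by rw [← hA_def]; linarith only [hδ0])
        have hxn : 1 - 2 * δ < ‖x‖ := by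
          have h1 := hgle x
          nlinarith only [h1, hx2, hAge, hA1, hA0, norm_nonneg x]
        have hmm := master x 0 1 0 hx1 (by simp) zero_le_one le_rfl (le_of_eq N_norm₁) (by
          have hh2 : (1:ℝ) * g x + 0 * h 0 = g x := by ring
          rw [hh2]; linarith only [hx2, hAge, hδα, hδ0])
        rw [zero_smul, zero_sub, norm_neg, one_smul, hx00, sub_zero] at hmm
        have hs := hsum2ρ _ _ hmm
        have hη2 : η ^ 2 ≤ η := by nlinarith only [hη0, hη1]
        linarith only [hs, hq1', hxn, hδη, hη2, hη_def, hη0]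
      · -- `‖x0‖ > 0`
        obtain ⟨x, hxmem, hxfar⟩ := myfar (by linarith only [hρ0] : (0:ℝ) < ρ + 1) hX
          (‖x0‖⁻¹ • x0)
          (by rw [norm_smul, Real.norm_eq_abs, abs_inv, abs_of_pos hppos,
            inv_mul_cancel₀ hppos.ne']) hφn (div_pos hδ0 hApos)
        obtain ⟨hx1, hx2⟩ := hslice x hxmem
        have hdX := mydist_bd zero_le_one hx1 rfl hppos hρ0.le hxfar
        rw [max_eq_left hp1, min_eq_right hp1] at hdX
        have hmm := master x 0 1 0 hx1 (by simp) zero_le_one le_rfl (le_of_eq N_norm₁) (by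
          have hh2 : (1:ℝ) * g x + 0 * h 0 = g x := by ring
          rw [hh2]; linarith only [hx2, hAge, hδα, hδ0])
        rw [zero_smul, zero_sub, norm_neg] at hmm
        have hs := hsum2ρ _ _ hmm
        linarith only [hs, hdX, hpq1, hρ1]
    · -- Case `A > 0`, `B > 0`
      have hφXn : ‖A⁻¹ • g‖ = 1 := by
        have hsm := norm_smul A⁻¹ g
        rw [hsm, Real.norm_eq_abs, abs_inv, abs_of_pos hApos, ← hA_def,
          inv_mul_cancel₀ hApos.ne']
      have hφYn : ‖B⁻¹ • h‖ = 1 := by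
        have hsm := norm_smul B⁻¹ h
        rw [hsm, Real.norm_eq_abs, abs_inv, abs_of_pos hBpos, ← hB_def,
          inv_mul_cancel₀ hBpos.ne']
      have hsliceX : ∀ x, x ∈ sliceSet X (A⁻¹ • g) (δ / A) → ‖x‖ ≤ 1 ∧ A - δ < g x := by
        rintro x ⟨hx1, hx2⟩
        refine ⟨mem_closedBall_zero_iff.1 hx1, ?_⟩
        have hx2' : 1 - δ / A < A⁻¹ * g x := by
          simpa [ContinuousLinearMap.smul_apply, smul_eq_mul] using hx2
        have h3 := mul_lt_mul_of_pos_left hx2' hApos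
        have e1 : A * (1 - δ / A) = A - δ := by field_simp
        have e2 : A * (A⁻¹ * g x) = g x := by field_simp
        rw [e1, e2] at h3
        exact h3
      have hsliceY : ∀ y, y ∈ sliceSet Y (B⁻¹ • h) (δ / B) → ‖y‖ ≤ 1 ∧ B - δ < h y := by
        rintro y ⟨hy1, hy2⟩
        refine ⟨mem_closedBall_zero_iff.1 hy1, ?_⟩
        have hy2' : 1 - δ / B < B⁻¹ * h y := by
          simpa [ContinuousLinearMap.smul_apply, smul_eq_mul] using hy2
        have h3 := mul_lt_mul_of_pos_left hy2' hBpos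
        have e1 : B * (1 - δ / B) = B - δ := by field_simp
        have e2 : B * (B⁻¹ * h y) = h y := by field_simp
        rw [e1, e2] at h3
        exact h3
      have hmem2 : ∀ (x : X) (y : Y), A - δ < g x → B - δ < h y →
          1 - α < a * g x + b * h y := by
        intro x y hx2 hy2
        have t1 : a * (A - δ) ≤ a * g x := mul_le_mul_of_nonneg_left hx2.le ha0
        have t2 : b * (B - δ) ≤ b * h y := mul_le_mul_of_nonneg_left hy2.le hb0
        have t3 : a * δ ≤ δ := mul_le_of_le_one_left hδ0.le hab1
        have t4 : b * δ ≤ δ := mul_le_of_le_one_left hδ0.le hbb1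
        linarith only [hABab, hδα, t1, t2, t3, t4]
      rcases eq_or_lt_of_le (norm_nonneg x0) with hp0 | hppos
      · -- Case IV : `‖x0‖ = 0`, so `‖y0‖ = 1`
        have hx00 : x0 = 0 := norm_eq_zero.1 hp0.symm
        have hq1' : ‖y0‖ = 1 := by
          rw [← hp0, hN0t] at hpq
          rwa [abs_of_nonneg (norm_nonneg _)] at hpq
        obtain ⟨x, hx1, hx2⟩ := myexists_slice_pt g
          (show A - δ < ‖g‖ by rw [← hA_def]; linarith only [hδ0])
        obtain ⟨y, hymem, hyfar⟩ := myfar (by linarith only [hρ0] : (0:ℝ) < ρ + 1) hY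
          (‖y0‖⁻¹ • y0)
          (by rw [norm_smul, Real.norm_eq_abs, abs_inv,
            abs_of_pos (by rw [hq1']; norm_num : (0:ℝ) < ‖y0‖),
            inv_mul_cancel₀ (by rw [hq1']; norm_num : ‖y0‖ ≠ 0)]) hφYn
          (div_pos hδ0 hBpos)
        obtain ⟨hy1, hy2⟩ := hsliceY y hymem
        have hdY := mydist_bd hb0 hy1 rfl (by rw [hq1']; norm_num : (0:ℝ) < ‖y0‖)
          hρ0.le hyfar
        rw [hq1', max_eq_right hbb1, min_eq_left hbb1] at hdY
        have hmm := master x y a b hx1 hy1 ha0 hb0 (le_of_eq hNab) (hmem2 x y hx2 hy2)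
        have hs := hsum2ρ _ _ hmm
        have hdXeq : ‖a • x - x0‖ = a * ‖x‖ := by
          rw [hx00, sub_zero, norm_smul, Real.norm_eq_abs, abs_of_nonneg ha0]
        rcases le_or_gt (2 * δ / η) A with hbr | hbr
        · have h2δ : 2 * δ ≤ A * η := by
            rw [div_le_iff₀ hη0] at hbr; linarith only [hbr]
          have hxn : 1 - η / 2 ≤ ‖x‖ := by
            nlinarith only [hgle x, hx2, hApos, h2δ]
          have hdX2 : a - η / 2 ≤ ‖a • x - x0‖ := by
            rw [hdXeq]
            have t1 := mul_le_mul_of_nonneg_left hxn ha0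
            have t2 : a * η ≤ η := mul_le_of_le_one_left hη0.le hab1
            linarith only [t1, t2]
          linarith only [hs, hdY, hdX2, habsum, hη_def, hρ1]
        · have hAη : A * η < 2 * δ := by
            rw [lt_div_iff₀ hη0] at hbr; linarith only [hbr]
          have hA3 : A < η / 3 :=
            lt_of_mul_lt_mul_right (by nlinarith only [hAη, hδη]) hη0.le
          have hδ3 : δ ≤ η / 6 := by
            nlinarith only [hδη, mul_le_of_le_one_right hη0.le hη1]
          have hbig : 1 - η / 2 ≤ b := by
            have t1 : a * A ≤ A := mul_le_of_le_one_left hA0 hab1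
            have t2 : b * B ≤ b := mul_le_of_le_one_right hb0 hB1
            linarith only [hABab, t1, t2, hA3, hδ3]
          linarith only [hs, hdY, hbig, norm_nonneg (a • x - x0), hη_def, hρ1]
      · rcases eq_or_lt_of_le (norm_nonneg y0) with hq0 | hqpos
        · -- Case V : `‖y0‖ = 0`, so `‖x0‖ = 1`
          have hy00 : y0 = 0 := norm_eq_zero.1 hq0.symm
          have hp1' : ‖x0‖ = 1 := by
            rw [← hq0, hNt0] at hpq
            rwa [abs_of_nonneg (norm_nonneg _)] at hpq
          obtain ⟨y, hy1, hy2⟩ := myexists_slice_pt h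
            (show B - δ < ‖h‖ by rw [← hB_def]; linarith only [hδ0])
          obtain ⟨x, hxmem, hxfar⟩ := myfar (by linarith only [hρ0] : (0:ℝ) < ρ + 1) hX
            (‖x0‖⁻¹ • x0)
            (by rw [norm_smul, Real.norm_eq_abs, abs_inv, abs_of_pos hppos,
              inv_mul_cancel₀ hppos.ne']) hφXn (div_pos hδ0 hApos)
          obtain ⟨hx1, hx2⟩ := hsliceX x hxmem
          have hdX := mydist_bd ha0 hx1 rfl hppos hρ0.le hxfar
          rw [hp1', max_eq_right hab1, min_eq_left hab1] at hdX
          have hmm := master x y a b hx1 hy1 ha0 hb0 (le_of_eq hNab) (hmem2 x y hx2 hy2)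
          have hs := hsum2ρ _ _ hmm
          have hdYeq : ‖b • y - y0‖ = b * ‖y‖ := by
            rw [hy00, sub_zero, norm_smul, Real.norm_eq_abs, abs_of_nonneg hb0]
          rcases le_or_gt (2 * δ / η) B with hbr | hbr
          · have h2δ : 2 * δ ≤ B * η := by
              rw [div_le_iff₀ hη0] at hbr; linarith only [hbr]
            have hyn : 1 - η / 2 ≤ ‖y‖ := by
              nlinarith only [hhle y, hy2, hBpos, h2δ]
            have hdY2 : b - η / 2 ≤ ‖b • y - y0‖ := by
              rw [hdYeq]
              have t1 := mul_le_mul_of_nonneg_left hyn hb0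
              have t2 : b * η ≤ η := mul_le_of_le_one_left hη0.le hbb1
              linarith only [t1, t2]
            linarith only [hs, hdX, hdY2, habsum, hη_def, hρ1]
          · have hBη : B * η < 2 * δ := by
              rw [lt_div_iff₀ hη0] at hbr; linarith only [hbr]
            have hB3 : B < η / 3 :=
              lt_of_mul_lt_mul_right (by nlinarith only [hBη, hδη]) hη0.le
            have hδ3 : δ ≤ η / 6 := by
              nlinarith only [hδη, mul_le_of_le_one_right hη0.le hη1]
            have hbig : 1 - η / 2 ≤ a := by
              have t1 : b * B ≤ B := mul_le_of_le_one_left hB0 hbb1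
              have t2 : a * A ≤ a := mul_le_of_le_one_right ha0 hA1
              linarith only [hABab, t1, t2, hB3, hδ3]
            linarith only [hs, hdX, hbig, norm_nonneg (b • y - y0), hη_def, hρ1]
        · -- Case I : `‖x0‖ > 0` and `‖y0‖ > 0`
          obtain ⟨x, hxmem, hxfar⟩ := myfar (by linarith only [hρ0] : (0:ℝ) < ρ + 1) hX
            (‖x0‖⁻¹ • x0)
            (by rw [norm_smul, Real.norm_eq_abs, abs_inv, abs_of_pos hppos,
              inv_mul_cancel₀ hppos.ne']) hφXn (div_pos hδ0 hApos)
          obtain ⟨hx1, hx2⟩ := hsliceX x hxmem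
          obtain ⟨y, hymem, hyfar⟩ := myfar (by linarith only [hρ0] : (0:ℝ) < ρ + 1) hY
            (‖y0‖⁻¹ • y0)
            (by rw [norm_smul, Real.norm_eq_abs, abs_inv, abs_of_pos hqpos,
              inv_mul_cancel₀ hqpos.ne']) hφYn (div_pos hδ0 hBpos)
          obtain ⟨hy1, hy2⟩ := hsliceY y hymem
          have hdX := mydist_bd ha0 hx1 rfl hppos hρ0.le hxfar
          have hdY := mydist_bd hb0 hy1 rfl hqpos hρ0.le hyfar
          have hmm := master x y a b hx1 hy1 ha0 hb0 (le_of_eq hNab) (hmem2 x y hx2 hy2)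
          have hs := hsum2ρ _ _ hmm
          have hmaxX : max a ‖x0‖ + min a ‖x0‖ = a + ‖x0‖ := max_add_min a ‖x0‖
          have hmaxY : max b ‖y0‖ + min b ‖y0‖ = b + ‖y0‖ := max_add_min b ‖y0‖
          have prod1 : 0 ≤ ρ * (max a ‖x0‖ + max b ‖y0‖ +
              (min a ‖x0‖ + min b ‖y0‖) - 2) :=
            mul_nonneg hρ0.le (by linarith only [hmaxX, hmaxY, habsum, hpq1])
          have prod2 : 0 ≤ (min a ‖x0‖ + min b ‖y0‖) * (1 - ρ) :=
            mul_nonneg (by positivity) (by linarith only [hρ1])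
          linarith only [hs, hdX, hdY, prod1, prod2]
end
end

section
/- Let X and Y be real Banach spaces, let N be an absolute normalized norm on ℝ², and let γ > 0 be such that N(a,b) ≥ γ(|a| + |b|) for all (a,b) ∈ ℝ². Then 𝒯(X ⊕_N Y) ≥ 2γ(min{𝒯(X), 𝒯(Y)} − 1). In particular, for 1 < p < ∞, 𝒯(X ⊕_p Y) ≥ 2^{1/p}(min{𝒯(X), 𝒯(Y)} − 1), where X ⊕_p Y is the ℓ_p-sum. -/
open Metric Set

noncomputable section

variable (X : Type*) [NormedAddCommGroup X] [NormedSpace ℝ X]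

section AuxLemmas

variable {E G : Type*} [NormedAddCommGroup E] [NormedSpace ℝ E]
  [NormedAddCommGroup G] [NormedSpace ℝ G]

lemma isWeaklyOpen_affine_preimage (U : Set G) (hU : IsWeaklyOpen G U)
    (L : E →L[ℝ] G) (c : G) : IsWeaklyOpen E {u : E | L u + c ∈ U} := by
  have hF : Continuous fun w : WeakSpace ℝ E => (WeakSpace.map L) w + toWeakSpace ℝ G c :=
    ((WeakSpace.map L).continuous).add continuous_const
  have himg : toWeakSpace ℝ E '' {u : E | L u + c ∈ U} =
      (fun w : WeakSpace ℝ E => (WeakSpace.map L) w + toWeakSpace ℝ G c) ⁻¹'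
        (toWeakSpace ℝ G '' U) := by
    ext w
    constructor
    · rintro ⟨u, hu, rfl⟩
      exact ⟨L u + c, hu, rfl⟩
    · rintro ⟨g, hg, hgeq⟩
      refine ⟨(toWeakSpace ℝ E).symm w, ?_, by simp⟩
      have hg' : g = L ((toWeakSpace ℝ E).symm w) + c := hgeq
      show L ((toWeakSpace ℝ E).symm w) + c ∈ U
      rwa [hg'] at hg
  unfold IsWeaklyOpen
  rw [himg]
  exact hF.isOpen_preimage _ hU

lemma ex_far_point {s : ℝ} (hs0 : 0 < s) (hsT : s < Tw E) (x : E) (hx : ‖x‖ = 1)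
    (V : Set E) (hV : IsRelWeakOpen E V) : ∃ u ∈ V, s < ‖u - x‖ := by
  by_contra h
  push_neg at h
  have hmem : s ∈ {r : ℝ | 0 < r ∧ ∃ x : E, ‖x‖ = 1 ∧ ∃ W : Set E, IsRelWeakOpen E W ∧
      W ⊆ closedBall x r} := by
    refine ⟨hs0, x, hx, V, hV, fun u hu => ?_⟩
    rw [mem_closedBall, dist_eq_norm]
    exact h u hu
  have : Tw E ≤ s := csInf_le ⟨0, fun t ht => ht.1.le⟩ hmem
  linarith

end AuxLemmas


section NFacts

variable (N : ℝ → ℝ → ℝ)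

lemma N_fst (N_homog : ∀ t a b : ℝ, N (t * a) (t * b) = |t| * N a b)
    (N_norm₁ : N 1 0 = 1) (a : ℝ) : N a 0 = |a| := by
  simpa [N_norm₁] using N_homog a 1 0

lemma N_snd (N_homog : ∀ t a b : ℝ, N (t * a) (t * b) = |t| * N a b)
    (N_norm₂ : N 0 1 = 1) (b : ℝ) : N 0 b = |b| := by
  simpa [N_norm₂] using N_homog b 0 1

lemma N_mono_left (N_triangle : ∀ a b c d : ℝ, N (a + c) (b + d) ≤ N a b + N c d)
    (N_homog : ∀ t a b : ℝ, N (t * a) (t * b) = |t| * N a b)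
    (N_abs : ∀ a b : ℝ, N a b = N |a| |b|)
    {a a' : ℝ} (b : ℝ) (ha : 0 ≤ a) (haa : a ≤ a') : N a b ≤ N a' b := by
  rcases eq_or_lt_of_le (ha.trans haa) with h | h
  · have : a = 0 := le_antisymm (haa.trans h.symm.le) ha
    rw [this, ← h]
  · have h2a : (2 * a') ≠ 0 := by positivity
    have hlm : (a' + a) / (2 * a') + (a' - a) / (2 * a') = 1 := by
      field_simp
      ring
    have hl : 0 ≤ (a' + a) / (2 * a') := by positivity
    have hm : 0 ≤ (a' - a) / (2 * a') := div_nonneg (by linarith) (by linarith)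
    have h1 : a = (a' + a) / (2 * a') * a' + (a' - a) / (2 * a') * (-a') := by
      field_simp
      ring
    have h2 : b = (a' + a) / (2 * a') * b + (a' - a) / (2 * a') * b := by
      rw [← add_mul, hlm, one_mul]
    have key : N a b ≤ N ((a' + a) / (2 * a') * a') ((a' + a) / (2 * a') * b)
        + N ((a' - a) / (2 * a') * (-a')) ((a' - a) / (2 * a') * b) := by
      nth_rewrite 1 [h1]
      nth_rewrite 1 [h2]
      exact N_triangle _ _ _ _
    rw [N_homog, N_homog, abs_of_nonneg hl, abs_of_nonneg hm] at key
    have hneg : N (-a') b = N a' b := by rw [N_abs (-a') b, abs_neg, ← N_abs]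
    rw [hneg, ← add_mul, hlm, one_mul] at key
    exact key

lemma N_mono_right (N_triangle : ∀ a b c d : ℝ, N (a + c) (b + d) ≤ N a b + N c d)
    (N_homog : ∀ t a b : ℝ, N (t * a) (t * b) = |t| * N a b)
    (N_abs : ∀ a b : ℝ, N a b = N |a| |b|)
    (a : ℝ) {b b' : ℝ} (hb : 0 ≤ b) (hbb : b ≤ b') : N a b ≤ N a b' := by
  rcases eq_or_lt_of_le (hb.trans hbb) with h | h
  · have : b = 0 := le_antisymm (hbb.trans h.symm.le) hb
    rw [this, ← h]
  · have h2b : (2 * b') ≠ 0 := by positivity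
    have hlm : (b' + b) / (2 * b') + (b' - b) / (2 * b') = 1 := by
      field_simp
      ring
    have hl : 0 ≤ (b' + b) / (2 * b') := by positivity
    have hm : 0 ≤ (b' - b) / (2 * b') := div_nonneg (by linarith) (by linarith)
    have h1 : b = (b' + b) / (2 * b') * b' + (b' - b) / (2 * b') * (-b') := by
      field_simp
      ring
    have h2 : a = (b' + b) / (2 * b') * a + (b' - b) / (2 * b') * a := by
      rw [← add_mul, hlm, one_mul]
    have key : N a b ≤ N ((b' + b) / (2 * b') * a) ((b' + b) / (2 * b') * b')
        + N ((b' - b) / (2 * b') * a) ((b' - b) / (2 * b') * (-b')) := by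
      nth_rewrite 1 [h1]
      nth_rewrite 1 [h2]
      exact N_triangle _ _ _ _
    rw [N_homog, N_homog, abs_of_nonneg hl, abs_of_nonneg hm] at key
    have hneg : N a (-b') = N a b' := by rw [N_abs a (-b'), abs_neg, ← N_abs]
    rw [hneg, ← add_mul, hlm, one_mul] at key
    exact key

lemma N_mono (N_triangle : ∀ a b c d : ℝ, N (a + c) (b + d) ≤ N a b + N c d)
    (N_homog : ∀ t a b : ℝ, N (t * a) (t * b) = |t| * N a b)
    (N_abs : ∀ a b : ℝ, N a b = N |a| |b|)
    {a a' b b' : ℝ} (ha : 0 ≤ a) (haa : a ≤ a') (hb : 0 ≤ b) (hbb : b ≤ b') :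
    N a b ≤ N a' b' :=
  (N_mono_left N N_triangle N_homog N_abs b ha haa).trans
    (N_mono_right N N_triangle N_homog N_abs a' hb hbb)

lemma N_le_add (N_triangle : ∀ a b c d : ℝ, N (a + c) (b + d) ≤ N a b + N c d)
    (N_homog : ∀ t a b : ℝ, N (t * a) (t * b) = |t| * N a b)
    (N_norm₁ : N 1 0 = 1) (N_norm₂ : N 0 1 = 1) (a b : ℝ) : N a b ≤ |a| + |b| := by
  have h := N_triangle a 0 0 b
  simpa [N_fst N N_homog N_norm₁, N_snd N N_homog N_norm₂] using h

lemma N_le_left (N_triangle : ∀ a b c d : ℝ, N (a + c) (b + d) ≤ N a b + N c d)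
    (N_homog : ∀ t a b : ℝ, N (t * a) (t * b) = |t| * N a b)
    (N_abs : ∀ a b : ℝ, N a b = N |a| |b|) (N_norm₁ : N 1 0 = 1)
    (a b : ℝ) : |a| ≤ N a b := by
  have h : N |a| 0 ≤ N |a| |b| :=
    N_mono_right N N_triangle N_homog N_abs _ le_rfl (abs_nonneg _)
  rw [N_fst N N_homog N_norm₁, abs_abs, ← N_abs] at h
  exact h

lemma N_le_right (N_triangle : ∀ a b c d : ℝ, N (a + c) (b + d) ≤ N a b + N c d)
    (N_homog : ∀ t a b : ℝ, N (t * a) (t * b) = |t| * N a b)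
    (N_abs : ∀ a b : ℝ, N a b = N |a| |b|) (N_norm₂ : N 0 1 = 1)
    (a b : ℝ) : |b| ≤ N a b := by
  have h : N 0 |b| ≤ N |a| |b| :=
    N_mono_left N N_triangle N_homog N_abs _ le_rfl (abs_nonneg _)
  rw [N_snd N N_homog N_norm₂, abs_abs, ← N_abs] at h
  exact h

end NFacts


section AuxLemmas2

variable {E : Type*} [NormedAddCommGroup E] [NormedSpace ℝ E]

lemma ex_center (x₀ : E) (hx₀ : ‖x₀‖ = 1) (z : E) (hz : ‖z‖ ≤ 1) :
    ∃ x : E, ‖x‖ = 1 ∧ ‖x - z‖ = 1 - ‖z‖ := by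
  by_cases h : z = 0
  · exact ⟨x₀, hx₀, by simp [h, hx₀]⟩
  · have hzpos : 0 < ‖z‖ := norm_pos_iff.2 h
    have h01 : 0 ≤ ‖z‖⁻¹ - 1 := by nlinarith [inv_mul_cancel₀ hzpos.ne']
    refine ⟨‖z‖⁻¹ • z, ?_, ?_⟩
    · rw [norm_smul, Real.norm_eq_abs, abs_of_nonneg (inv_nonneg.2 (norm_nonneg _)),
        inv_mul_cancel₀ hzpos.ne']
    · rw [show ‖z‖⁻¹ • z - z = (‖z‖⁻¹ - 1) • z by rw [sub_smul, one_smul], norm_smul,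
        Real.norm_eq_abs, abs_of_nonneg h01]
      field_simp

end AuxLemmas2

lemma tw_lower {X Y Z : Type*} [NormedAddCommGroup X] [NormedSpace ℝ X] [Nontrivial X]
    [NormedAddCommGroup Y] [NormedSpace ℝ Y] [Nontrivial Y]
    [NormedAddCommGroup Z] [NormedSpace ℝ Z]
    (N : ℝ → ℝ → ℝ)
    (N_triangle : ∀ a b c d : ℝ, N (a + c) (b + d) ≤ N a b + N c d)
    (N_homog : ∀ t a b : ℝ, N (t * a) (t * b) = |t| * N a b)
    (N_abs : ∀ a b : ℝ, N a b = N |a| |b|)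
    (N_norm₁ : N 1 0 = 1) (N_norm₂ : N 0 1 = 1)
    (e : Z ≃ₗ[ℝ] X × Y) (hZ : ∀ z : Z, ‖z‖ = N ‖(e z).1‖ ‖(e z).2‖)
    (γ : ℝ) (hγ : 0 < γ) (hγN : ∀ a b : ℝ, γ * (|a| + |b|) ≤ N a b) :
    2 * γ * (min (Tw X) (Tw Y) - 1) ≤ Tw Z := by
  classical
  obtain ⟨x₀, hx₀⟩ := exists_norm_eq X zero_le_one
  obtain ⟨y₀, hy₀⟩ := exists_norm_eq Y zero_le_one
  have hsymm : ∀ (x : X) (y : Y), ‖e.symm (x, y)‖ = N ‖x‖ ‖y‖ := fun x y => by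
    simpa using hZ (e.symm (x, y))
  have hLx : ∀ a : ℝ, ∃ L : X →L[ℝ] Z, ∀ u : X, L u = e.symm (a • u, (0 : Y)) := by
    intro a
    refine ⟨LinearMap.mkContinuous
      { toFun := fun u => e.symm (a • u, (0 : Y)),
        map_add' := fun u v => by
          rw [← map_add]
          congr 1
          simp [Prod.mk_add_mk, smul_add],
        map_smul' := fun t u => by
          rw [RingHom.id_apply, ← map_smul]
          congr 1
          simp [Prod.smul_mk, smul_comm a t u] } |a| (fun u => ?_), fun u => rfl⟩
    show ‖e.symm (a • u, (0:Y))‖ ≤ |a| * ‖u‖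
    have : ‖e.symm (a • u, (0:Y))‖ = ‖a • u‖ := by
      rw [hsymm, norm_zero, N_fst N N_homog N_norm₁, abs_of_nonneg (norm_nonneg _)]
    rw [this, norm_smul, Real.norm_eq_abs]
  have hLy : ∀ b : ℝ, ∃ L : Y →L[ℝ] Z, ∀ v : Y, L v = e.symm ((0 : X), b • v) := by
    intro b
    refine ⟨LinearMap.mkContinuous
      { toFun := fun v => e.symm ((0 : X), b • v),
        map_add' := fun u v => by
          rw [← map_add]
          congr 1
          simp [Prod.mk_add_mk, smul_add],
        map_smul' := fun t u => by
          rw [RingHom.id_apply, ← map_smul]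
          congr 1
          simp [Prod.smul_mk, smul_comm b t u] } |b| (fun v => ?_), fun v => rfl⟩
    show ‖e.symm ((0:X), b • v)‖ ≤ |b| * ‖v‖
    have : ‖e.symm ((0:X), b • v)‖ = ‖b • v‖ := by
      rw [hsymm, norm_zero, N_snd N N_homog N_norm₂, abs_of_nonneg (norm_nonneg _)]
    rw [this, norm_smul, Real.norm_eq_abs]
  have hz0 : ‖e.symm (x₀, (0:Y))‖ = 1 := by
    rw [hsymm, hx₀, norm_zero]
    exact N_norm₁
  have hUniv : IsWeaklyOpen Z univ := by
    unfold IsWeaklyOpen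
    rw [Set.image_univ, Set.range_eq_univ.mpr (toWeakSpace ℝ Z).surjective]
    exact isOpen_univ
  refine le_csInf ⟨2, by norm_num, e.symm (x₀, 0), hz0, closedBall 0 1,
    ⟨⟨0, by simp⟩, univ, hUniv, by simp⟩, fun w hw => ?_⟩ ?_
  · rw [mem_closedBall, dist_eq_norm]
    have h1 : ‖w‖ ≤ 1 := mem_closedBall_zero_iff.mp hw
    calc ‖w - e.symm (x₀, 0)‖ ≤ ‖w‖ + ‖e.symm (x₀, 0)‖ := norm_sub_le _ _
      _ ≤ 2 := by rw [hz0]; linarith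
  rintro r ⟨hr0, z, hz, W, ⟨⟨w, hwW⟩, U, hUopen, hWeq⟩, hWr⟩
  subst hWeq
  obtain ⟨hwball, hwU⟩ := hwW
  have hwnorm : ‖w‖ ≤ 1 := mem_closedBall_zero_iff.mp hwball
  have key : min (Tw X) (Tw Y) ≤ 1 + r / (2 * γ) := by
    by_contra hcon
    push_neg at hcon
    obtain ⟨hsX, hsY⟩ := lt_min_iff.mp hcon
    set s : ℝ := 1 + r / (2 * γ) with hs
    have hs1 : 1 < s := by
      rw [hs]
      have : 0 < r / (2 * γ) := div_pos hr0 (by linarith)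
      linarith
    have hs0 : 0 < s := by linarith
    have hzz : e.symm ((e z).1, (e z).2) = z := by simp
    have hww : e.symm ((e w).1, (e w).2) = w := by simp
    have hNz : N ‖(e z).1‖ ‖(e z).2‖ = 1 := by rw [← hZ z]; exact hz
    have hNw : N ‖(e w).1‖ ‖(e w).2‖ ≤ 1 := by rw [← hZ w]; exact hwnorm
    have hz1le : ‖(e z).1‖ ≤ 1 := by
      have h := N_le_left N N_triangle N_homog N_abs N_norm₁ ‖(e z).1‖ ‖(e z).2‖
      rw [abs_of_nonneg (norm_nonneg _)] at h
      linarith [hNz ▸ h]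
    have hz2le : ‖(e z).2‖ ≤ 1 := by
      have h := N_le_right N N_triangle N_homog N_abs N_norm₂ ‖(e z).1‖ ‖(e z).2‖
      rw [abs_of_nonneg (norm_nonneg _)] at h
      linarith [hNz ▸ h]
    have hzsum : 1 ≤ ‖(e z).1‖ + ‖(e z).2‖ := by
      have h := N_le_add N N_triangle N_homog N_norm₁ N_norm₂ ‖(e z).1‖ ‖(e z).2‖
      rw [hNz, abs_of_nonneg (norm_nonneg _), abs_of_nonneg (norm_nonneg _)] at h
      exact h
    set a : ℝ := ‖(e w).1‖ with hadef
    have ha0 : 0 ≤ a := norm_nonneg _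
    have ha1 : a ≤ 1 := by
      have h := N_le_left N N_triangle N_homog N_abs N_norm₁ ‖(e w).1‖ ‖(e w).2‖
      rw [abs_of_nonneg (norm_nonneg _)] at h
      exact h.trans hNw
    have hw2le : ‖(e w).2‖ ≤ 1 := by
      have h := N_le_right N N_triangle N_homog N_abs N_norm₂ ‖(e w).1‖ ‖(e w).2‖
      rw [abs_of_nonneg (norm_nonneg _)] at h
      exact h.trans hNw
    set b : ℝ := max ‖(e w).2‖ (1 - a) with hbdef
    have hb0 : 0 ≤ b := le_trans (norm_nonneg _) (le_max_left _ _)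
    have hb1 : b ≤ 1 := max_le hw2le (by linarith)
    have hab : 1 ≤ a + b := by
      have h := le_max_right ‖(e w).2‖ (1 - a)
      rw [← hbdef] at h
      linarith
    have hNab : N a b ≤ 1 := by
      rcases max_cases ‖(e w).2‖ (1 - a) with ⟨hbeq, _⟩ | ⟨hbeq, _⟩
      · rw [hbdef, hbeq]
        exact hNw
      · rw [hbdef, hbeq]
        have h := N_triangle a 0 0 (1 - a)
        rw [add_zero, zero_add, N_fst N N_homog N_norm₁, N_snd N N_homog N_norm₂,
          abs_of_nonneg ha0, abs_of_nonneg (by linarith : (0:ℝ) ≤ 1 - a)] at h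
        linarith
    obtain ⟨xh, hxh1, hxhz⟩ := ex_center x₀ hx₀ (e z).1 hz1le
    obtain ⟨yh, hyh1, hyhz⟩ := ex_center y₀ hy₀ (e z).2 hz2le
    obtain ⟨L₁, hL₁⟩ := hLx a
    have hV₁open : IsWeaklyOpen X {u : X | e.symm (a • u, (e w).2) ∈ U} := by
      have h := isWeaklyOpen_affine_preimage U hUopen L₁ (e.symm (0, (e w).2))
      have hset : {u : X | L₁ u + e.symm (0, (e w).2) ∈ U}
          = {u : X | e.symm (a • u, (e w).2) ∈ U} := by
        ext u
        rw [mem_setOf_eq, mem_setOf_eq, hL₁, ← map_add]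
        simp
      rwa [hset] at h
    have hV₁ : IsRelWeakOpen X (closedBall 0 1 ∩ {u : X | e.symm (a • u, (e w).2) ∈ U}) := by
      have hbase : ∃ u₀ : X, ‖u₀‖ ≤ 1 ∧ a • u₀ = (e w).1 := by
        by_cases h : a = 0
        · refine ⟨0, by simp, ?_⟩
          have h1 : ‖(e w).1‖ = 0 := by rw [← hadef, h]
          simp [norm_eq_zero.mp h1, h]
        · refine ⟨a⁻¹ • (e w).1, ?_, ?_⟩
          · rw [norm_smul, Real.norm_eq_abs, abs_of_nonneg (inv_nonneg.2 ha0), ← hadef,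
              inv_mul_cancel₀ h]
          · rw [smul_smul, mul_inv_cancel₀ h, one_smul]
      obtain ⟨u₀, hu₀n, hu₀e⟩ := hbase
      refine ⟨⟨u₀, mem_closedBall_zero_iff.mpr hu₀n, ?_⟩, _, hV₁open, rfl⟩
      show e.symm (a • u₀, (e w).2) ∈ U
      rw [hu₀e, hww]
      exact hwU
    obtain ⟨u, hu, hufar⟩ := ex_far_point hs0 hsX xh hxh1 _ hV₁
    obtain ⟨huball, huU⟩ := hu
    have hu1 : ‖u‖ ≤ 1 := mem_closedBall_zero_iff.mp huball
    have huU' : e.symm (a • u, (e w).2) ∈ U := huU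
    obtain ⟨L₂, hL₂⟩ := hLy b
    have hV₂open : IsWeaklyOpen Y {v : Y | e.symm (a • u, b • v) ∈ U} := by
      have h := isWeaklyOpen_affine_preimage U hUopen L₂ (e.symm (a • u, 0))
      have hset : {v : Y | L₂ v + e.symm (a • u, (0:Y)) ∈ U}
          = {v : Y | e.symm (a • u, b • v) ∈ U} := by
        ext v
        rw [mem_setOf_eq, mem_setOf_eq, hL₂, ← map_add]
        simp
      rwa [hset] at h
    have hV₂ : IsRelWeakOpen Y (closedBall 0 1 ∩ {v : Y | e.symm (a • u, b • v) ∈ U}) := by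
      have hbase : ∃ v₀ : Y, ‖v₀‖ ≤ 1 ∧ b • v₀ = (e w).2 := by
        by_cases h : b = 0
        · refine ⟨0, by simp, ?_⟩
          have h2 : ‖(e w).2‖ ≤ 0 := by
            have := le_max_left ‖(e w).2‖ (1 - a)
            rw [← hbdef, h] at this
            exact this
          simp [norm_le_zero_iff.mp h2, h]
        · have hble : ‖(e w).2‖ ≤ b := by rw [hbdef]; exact le_max_left _ _
          refine ⟨b⁻¹ • (e w).2, ?_, ?_⟩
          · rw [norm_smul, Real.norm_eq_abs, abs_of_nonneg (inv_nonneg.2 hb0)]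
            calc b⁻¹ * ‖(e w).2‖ ≤ b⁻¹ * b :=
                mul_le_mul_of_nonneg_left hble (inv_nonneg.2 hb0)
              _ = 1 := inv_mul_cancel₀ h
          · rw [smul_smul, mul_inv_cancel₀ h, one_smul]
      obtain ⟨v₀, hv₀n, hv₀e⟩ := hbase
      refine ⟨⟨v₀, mem_closedBall_zero_iff.mpr hv₀n, ?_⟩, _, hV₂open, rfl⟩
      show e.symm (a • u, b • v₀) ∈ U
      rw [hv₀e]
      exact huU'
    obtain ⟨v, hv, hvfar⟩ := ex_far_point hs0 hsY yh hyh1 _ hV₂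
    obtain ⟨hvball, hvU⟩ := hv
    have hv1 : ‖v‖ ≤ 1 := mem_closedBall_zero_iff.mp hvball
    have hvU' : e.symm (a • u, b • v) ∈ U := hvU
    have hwball' : e.symm (a • u, b • v) ∈ closedBall (0:Z) 1 := by
      rw [mem_closedBall_zero_iff, hsymm]
      have h1 : ‖a • u‖ ≤ a := by
        rw [norm_smul, Real.norm_eq_abs, abs_of_nonneg ha0]
        calc a * ‖u‖ ≤ a * 1 := mul_le_mul_of_nonneg_left hu1 ha0
          _ = a := mul_one a
      have h2 : ‖b • v‖ ≤ b := by
        rw [norm_smul, Real.norm_eq_abs, abs_of_nonneg hb0]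
        calc b * ‖v‖ ≤ b * 1 := mul_le_mul_of_nonneg_left hv1 hb0
          _ = b := mul_one b
      calc N ‖a • u‖ ‖b • v‖ ≤ N a b :=
          N_mono N N_triangle N_homog N_abs (norm_nonneg _) h1 (norm_nonneg _) h2
        _ ≤ 1 := hNab
    have hdist : ‖e.symm (a • u, b • v) - z‖ ≤ r := by
      have h := hWr ⟨hwball', hvU'⟩
      rwa [mem_closedBall, dist_eq_norm] at h
    have hnorm : ‖e.symm (a • u, b • v) - z‖
        = N ‖a • u - (e z).1‖ ‖b • v - (e z).2‖ := by
      have h : e.symm (a • u, b • v) - z = e.symm (a • u - (e z).1, b • v - (e z).2) := by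
        conv_lhs => rw [← hzz]
        rw [← map_sub, Prod.mk_sub_mk]
      rw [h, hsymm]
    have hγ2 := hγN ‖a • u - (e z).1‖ ‖b • v - (e z).2‖
    rw [abs_of_nonneg (norm_nonneg _), abs_of_nonneg (norm_nonneg _)] at hγ2
    have h1 : s - (1 - ‖(e z).1‖) - (1 - a) < ‖a • u - (e z).1‖ := by
      have t1 : ‖u - xh‖ ≤ ‖u - a • u‖ + ‖a • u - (e z).1‖ + ‖(e z).1 - xh‖ := by
        have e1 : u - xh = (u - a • u) + (a • u - (e z).1) + ((e z).1 - xh) := by abel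
        rw [e1]
        exact (norm_add_le _ _).trans
          (by linarith [norm_add_le (u - a • u) (a • u - (e z).1)])
      have t2 : ‖u - a • u‖ ≤ 1 - a := by
        rw [show u - a • u = (1 - a) • u by rw [sub_smul, one_smul], norm_smul,
          Real.norm_eq_abs, abs_of_nonneg (by linarith : (0:ℝ) ≤ 1 - a)]
        calc (1 - a) * ‖u‖ ≤ (1 - a) * 1 := mul_le_mul_of_nonneg_left hu1 (by linarith)
          _ = 1 - a := mul_one _
      have t3 : ‖(e z).1 - xh‖ = 1 - ‖(e z).1‖ := by rw [norm_sub_rev]; exact hxhz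
      linarith [hufar]
    have h2 : s - (1 - ‖(e z).2‖) - (1 - b) < ‖b • v - (e z).2‖ := by
      have t1 : ‖v - yh‖ ≤ ‖v - b • v‖ + ‖b • v - (e z).2‖ + ‖(e z).2 - yh‖ := by
        have e1 : v - yh = (v - b • v) + (b • v - (e z).2) + ((e z).2 - yh) := by abel
        rw [e1]
        exact (norm_add_le _ _).trans
          (by linarith [norm_add_le (v - b • v) (b • v - (e z).2)])
      have t2 : ‖v - b • v‖ ≤ 1 - b := by
        rw [show v - b • v = (1 - b) • v by rw [sub_smul, one_smul], norm_smul,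
          Real.norm_eq_abs, abs_of_nonneg (by linarith : (0:ℝ) ≤ 1 - b)]
        calc (1 - b) * ‖v‖ ≤ (1 - b) * 1 := mul_le_mul_of_nonneg_left hv1 (by linarith)
          _ = 1 - b := mul_one _
      have t3 : ‖(e z).2 - yh‖ = 1 - ‖(e z).2‖ := by rw [norm_sub_rev]; exact hyhz
      linarith [hvfar]
    have hfinal : r < r := by
      have hsum : 2 * s - 2 < ‖a • u - (e z).1‖ + ‖b • v - (e z).2‖ := by linarith
      calc r = γ * (2 * s - 2) := by
            rw [hs]
            field_simp
            ring
        _ < γ * (‖a • u - (e z).1‖ + ‖b • v - (e z).2‖) :=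
            mul_lt_mul_of_pos_left hsum hγ
        _ ≤ N ‖a • u - (e z).1‖ ‖b • v - (e z).2‖ := hγ2
        _ = ‖e.symm (a • u, b • v) - z‖ := hnorm.symm
        _ ≤ r := hdist
    exact absurd hfinal (lt_irrefl r)
  calc 2 * γ * (min (Tw X) (Tw Y) - 1) ≤ 2 * γ * ((1 + r / (2 * γ)) - 1) := by
        apply mul_le_mul_of_nonneg_left (by linarith [key]) (by linarith : (0:ℝ) ≤ 2 * γ)
    _ = r := by field_simp; ring


theorem stmt_4 (X Y : Type*) [NormedAddCommGroup X] [NormedSpace ℝ X]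
    [CompleteSpace X] [Nontrivial X] [NormedAddCommGroup Y] [NormedSpace ℝ Y]
    [CompleteSpace Y] [Nontrivial Y]
    (N : ℝ → ℝ → ℝ)
    (N_triangle : ∀ a b c d : ℝ, N (a + c) (b + d) ≤ N a b + N c d)
    (N_homog : ∀ t a b : ℝ, N (t * a) (t * b) = |t| * N a b)
    (N_pos : ∀ a b : ℝ, N a b = 0 → a = 0 ∧ b = 0)
    (N_abs : ∀ a b : ℝ, N a b = N |a| |b|)
    (N_norm₁ : N 1 0 = 1) (N_norm₂ : N 0 1 = 1)
    (Z : Type*) [NormedAddCommGroup Z] [NormedSpace ℝ Z] [CompleteSpace Z]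
    (e : Z ≃ₗ[ℝ] X × Y) (hZ : ∀ z : Z, ‖z‖ = N ‖(e z).1‖ ‖(e z).2‖)
    (γ : ℝ) (hγ : 0 < γ) (hγN : ∀ a b : ℝ, γ * (|a| + |b|) ≤ N a b) :
    2 * γ * (min (Tw X) (Tw Y) - 1) ≤ Tw Z ∧
      ∀ (p : ENNReal) [Fact (1 ≤ p)], 1 < p → p ≠ ⊤ →
        (2 : ℝ) ^ (1 / p.toReal) * (min (Tw X) (Tw Y) - 1) ≤ Tw (WithLp p (X × Y)) := by
  refine ⟨tw_lower N N_triangle N_homog N_abs N_norm₁ N_norm₂ e hZ γ hγ hγN, ?_⟩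
  intro p _ hp hptop
  have hq1 : 1 < p.toReal := by
    rw [← ENNReal.toReal_one]
    exact (ENNReal.toReal_lt_toReal (by simp) hptop).mpr hp
  have hq0 : 0 < p.toReal := by linarith
  set q := p.toReal with hqdef
  set Nq : ℝ → ℝ → ℝ := fun x y => ‖(WithLp.equiv p (ℝ × ℝ)).symm (x, y)‖ with hNq
  have hNqeq : ∀ x y : ℝ, Nq x y = (|x| ^ q + |y| ^ q) ^ (1 / q) := by
    intro x y
    show ‖(WithLp.equiv p (ℝ × ℝ)).symm (x, y)‖ = (|x| ^ q + |y| ^ q) ^ (1 / q)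
    rw [WithLp.prod_norm_eq_add hq0]
    simp [Real.norm_eq_abs]
    rfl
  have hNtri : ∀ a b c d : ℝ, Nq (a + c) (b + d) ≤ Nq a b + Nq c d := by
    intro a b c d
    show ‖(WithLp.equiv p (ℝ × ℝ)).symm (a + c, b + d)‖ ≤ _
    calc ‖(WithLp.equiv p (ℝ × ℝ)).symm (a + c, b + d)‖
        = ‖(WithLp.equiv p (ℝ × ℝ)).symm (a, b) + (WithLp.equiv p (ℝ × ℝ)).symm (c, d)‖ := by
          rw [WithLp.equiv_symm_apply, ← WithLp.toLp_add]
          congr 1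
      _ ≤ _ := norm_add_le _ _
  have hNhom : ∀ t a b : ℝ, Nq (t * a) (t * b) = |t| * Nq a b := by
    intro t a b
    show ‖(WithLp.equiv p (ℝ × ℝ)).symm (t * a, t * b)‖
        = |t| * ‖(WithLp.equiv p (ℝ × ℝ)).symm (a, b)‖
    rw [show ((t * a, t * b) : ℝ × ℝ) = t • (a, b) by simp [Prod.smul_mk, smul_eq_mul],
      WithLp.equiv_symm_apply, WithLp.toLp_smul, norm_smul, Real.norm_eq_abs]
  have hNabs : ∀ a b : ℝ, Nq a b = Nq |a| |b| := by
    intro a b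
    rw [hNqeq, hNqeq, abs_abs, abs_abs]
  have hN1 : Nq 1 0 = 1 := by
    rw [hNqeq]
    simp [Real.zero_rpow hq0.ne', Real.one_rpow]
  have hN2 : Nq 0 1 = 1 := by
    rw [hNqeq]
    simp [Real.zero_rpow hq0.ne', Real.one_rpow]
  have hZp : ∀ z : WithLp p (X × Y),
      ‖z‖ = Nq ‖((WithLp.linearEquiv p ℝ (X × Y)) z).1‖ ‖((WithLp.linearEquiv p ℝ (X × Y)) z).2‖ := by
    intro z
    rw [hNqeq, WithLp.prod_norm_eq_add hq0 z]
    simp [abs_of_nonneg (norm_nonneg _), WithLp.linearEquiv_apply]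
    rfl
  have hkey : ∀ a b : ℝ, (2:ℝ) ^ (1 / q) / 2 * (|a| + |b|) ≤ Nq a b := by
    intro a b
    rw [hNqeq]
    have hnn := NNReal.rpow_add_le_mul_rpow_add_rpow ‖a‖₊ ‖b‖₊ hq1.le
    have hcoe : (|a| + |b|) ^ q ≤ 2 ^ (q - 1) * (|a| ^ q + |b| ^ q) := by
      have h := NNReal.coe_le_coe.mpr hnn
      push_cast [NNReal.coe_rpow] at h
      simpa [Real.norm_eq_abs] using h
    have h1 : ((|a| + |b|) ^ q) ^ (1 / q) = |a| + |b| := by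
      rw [← Real.rpow_mul (by positivity : (0:ℝ) ≤ |a| + |b|),
        show q * (1 / q) = 1 by field_simp, Real.rpow_one]
    have h2 : ((|a| + |b|) ^ q) ^ (1 / q) ≤ (2 ^ (q - 1) * (|a| ^ q + |b| ^ q)) ^ (1 / q) :=
      Real.rpow_le_rpow (by positivity) hcoe (by positivity)
    have h3 : ((2:ℝ) ^ (q - 1) * (|a| ^ q + |b| ^ q)) ^ (1 / q)
        = 2 / 2 ^ (1 / q) * ((|a| ^ q + |b| ^ q) ^ (1 / q)) := by
      rw [Real.mul_rpow (by positivity) (by positivity),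
        ← Real.rpow_mul (by norm_num : (0:ℝ) ≤ 2),
        show (q - 1) * (1 / q) = 1 - 1 / q by field_simp,
        Real.rpow_sub (by norm_num : (0:ℝ) < 2), Real.rpow_one]
    have hmain : |a| + |b| ≤ 2 / 2 ^ (1 / q) * ((|a| ^ q + |b| ^ q) ^ (1 / q)) := by
      rw [← h1]
      exact h2.trans h3.le
    have h2q : (0:ℝ) < 2 ^ (1 / q) := Real.rpow_pos_of_pos (by norm_num) _
    rw [div_mul_eq_mul_div, div_le_iff₀ (by norm_num : (0:ℝ) < 2)]
    calc 2 ^ (1 / q) * (|a| + |b|)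
        ≤ 2 ^ (1 / q) * (2 / 2 ^ (1 / q) * ((|a| ^ q + |b| ^ q) ^ (1 / q))) :=
          mul_le_mul_of_nonneg_left hmain h2q.le
      _ = (|a| ^ q + |b| ^ q) ^ (1 / q) * 2 := by
          field_simp
  have hres := tw_lower Nq hNtri hNhom hNabs hN1 hN2 (WithLp.linearEquiv p ℝ (X × Y)) hZp
    ((2:ℝ) ^ (1 / q) / 2) (by positivity) hkey
  calc (2:ℝ) ^ (1 / q) * (min (Tw X) (Tw Y) - 1)
      = 2 * ((2:ℝ) ^ (1 / q) / 2) * (min (Tw X) (Tw Y) - 1) := by ring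
    _ ≤ Tw (WithLp p (X × Y)) := hres
end
end

section
/- Let X and Y be real Banach spaces, let N be an absolute normalized norm on ℝ², and let Γ > 0 be such that N(a,b) ≤ Γ·max(|a|,|b|) for all (a,b) ∈ ℝ². If (1,0) or (0,1) is an extreme point of the closed unit ball of (ℝ², N), then 𝒯^s(X ⊕_N Y) ≤ Γ. In particular, for 1 < p < ∞, 𝒯^s(X ⊕_p Y) ≤ 2^{1/p}, where X ⊕_p Y is the ℓ_p-sum. -/
open Metric Set

noncomputable section

variable (X : Type*) [NormedAddCommGroup X] [NormedSpace ℝ X]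

lemma abs_fst_le_N (N : ℝ → ℝ → ℝ)
    (N_triangle : ∀ a b c d : ℝ, N (a + c) (b + d) ≤ N a b + N c d)
    (N_homog : ∀ t a b : ℝ, N (t * a) (t * b) = |t| * N a b)
    (N_abs : ∀ a b : ℝ, N a b = N |a| |b|)
    (N_norm₁ : N 1 0 = 1) (a b : ℝ) : |a| ≤ N a b := by
  have hNa0 : N a 0 = |a| := by
    have h := N_homog a 1 0
    rw [mul_one, mul_zero, N_norm₁, mul_one] at h
    exact h
  have h2 : N (a + a) (b + -b) ≤ N a b + N a (-b) := N_triangle a b a (-b)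
  have hab : N a (-b) = N a b := by rw [N_abs a (-b), abs_neg, ← N_abs]
  have h3 : N (a + a) (b + -b) = 2 * |a| := by
    have h := N_homog 2 a 0
    rw [show (2:ℝ) * a = a + a by ring, mul_zero, show |(2:ℝ)| = 2 by norm_num, hNa0] at h
    rw [show b + -b = (0:ℝ) by ring, h]
  rw [h3, hab] at h2
  linarith

lemma abs_snd_le_N (N : ℝ → ℝ → ℝ)
    (N_triangle : ∀ a b c d : ℝ, N (a + c) (b + d) ≤ N a b + N c d)
    (N_homog : ∀ t a b : ℝ, N (t * a) (t * b) = |t| * N a b)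
    (N_abs : ∀ a b : ℝ, N a b = N |a| |b|)
    (N_norm₂ : N 0 1 = 1) (a b : ℝ) : |b| ≤ N a b := by
  have hN0b : N 0 b = |b| := by
    have h := N_homog b 0 1
    rw [mul_one, mul_zero, N_norm₂, mul_one] at h
    exact h
  have h2 : N (a + -a) (b + b) ≤ N a b + N (-a) b := N_triangle a b (-a) b
  have hab : N (-a) b = N a b := by rw [N_abs (-a) b, abs_neg, ← N_abs]
  have h3 : N (a + -a) (b + b) = 2 * |b| := by
    have h := N_homog 2 0 b
    rw [show (2:ℝ) * b = b + b by ring, mul_zero, show |(2:ℝ)| = 2 by norm_num, hN0b] at h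
    rw [show a + -a = (0:ℝ) by ring, h]
  rw [h3, hab] at h2
  linarith

/-- Key claim from extremality of (1,0): points of the unit ball with first coordinate
near 1 have small second coordinate. -/
lemma key_claim (N : ℝ → ℝ → ℝ)
    (N_triangle : ∀ a b c d : ℝ, N (a + c) (b + d) ≤ N a b + N c d)
    (N_homog : ∀ t a b : ℝ, N (t * a) (t * b) = |t| * N a b)
    (N_abs : ∀ a b : ℝ, N a b = N |a| |b|)
    (N_norm₁ : N 1 0 = 1) (N_norm₂ : N 0 1 = 1)
    (hext : ((1 : ℝ), (0 : ℝ)) ∈ Set.extremePoints ℝ {q : ℝ × ℝ | N q.1 q.2 ≤ 1})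
    (Γ : ℝ) (hΓN : ∀ a b : ℝ, N a b ≤ Γ * max |a| |b|)
    (δ : ℝ) (hδ : 0 < δ) :
    ∃ α > (0:ℝ), ∀ a b : ℝ, N a b ≤ 1 → 1 - α < a → |b| ≤ δ := by
  by_contra hcon
  push_neg at hcon
  have H : ∀ n : ℕ, ∃ ab : ℝ × ℝ, N ab.1 ab.2 ≤ 1 ∧ 1 - 1/(n+1) < ab.1 ∧ δ < |ab.2| := by
    intro n
    obtain ⟨a, b, h1, h2, h3⟩ := hcon (1/(n+1)) (by positivity)
    exact ⟨(a, b), h1, h2, h3⟩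
  choose c hc1 hc2 hc3 using H
  set a : ℕ → ℝ := fun n => (c n).1 with ha_def
  set b : ℕ → ℝ := fun n => (c n).2 with hb_def
  have hb_mem : ∀ n, b n ∈ Icc (-1 : ℝ) 1 := by
    intro n
    have := (abs_snd_le_N N N_triangle N_homog N_abs N_norm₂ (a n) (b n)).trans (hc1 n)
    exact abs_le.mp this
  have ha_le : ∀ n, a n ≤ 1 := by
    intro n
    have := (abs_fst_le_N N N_triangle N_homog N_abs N_norm₁ (a n) (b n)).trans (hc1 n)
    exact (abs_le.mp this).2
  have ha_tendsto : Filter.Tendsto a Filter.atTop (nhds 1) := by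
    have hlow : Filter.Tendsto (fun n : ℕ => 1 - 1/((n:ℝ)+1)) Filter.atTop (nhds 1) := by
      have := tendsto_one_div_add_atTop_nhds_zero_nat (𝕜 := ℝ)
      have h2 := (tendsto_const_nhds (x := (1:ℝ)) (f := Filter.atTop (α := ℕ))).sub this
      simpa using h2
    refine tendsto_of_tendsto_of_tendsto_of_le_of_le hlow tendsto_const_nhds
      (fun n => (hc2 n).le) ha_le
  obtain ⟨β, hβmem, φ, hφ, hbφ⟩ := tendsto_subseq_of_bounded (isBounded_Icc (-1:ℝ) 1) hb_mem
  have haφ : Filter.Tendsto (a ∘ φ) Filter.atTop (nhds 1) :=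
    ha_tendsto.comp hφ.tendsto_atTop
  -- N 1 β ≤ 1
  have hstep : ∀ k, N 1 β ≤ 1 + Γ * max |1 - a (φ k)| |β - b (φ k)| := by
    intro k
    have h1 : N (a (φ k) + (1 - a (φ k))) (b (φ k) + (β - b (φ k))) ≤
        N (a (φ k)) (b (φ k)) + N (1 - a (φ k)) (β - b (φ k)) := N_triangle _ _ _ _
    rw [show a (φ k) + (1 - a (φ k)) = (1:ℝ) by ring,
      show b (φ k) + (β - b (φ k)) = β by ring] at h1
    have h2 := hΓN (1 - a (φ k)) (β - b (φ k))
    have h3 := hc1 (φ k)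
    linarith
  have hNβ : N 1 β ≤ 1 := by
    have hT : Filter.Tendsto (fun k => 1 + Γ * max |1 - a (φ k)| |β - b (φ k)|)
        Filter.atTop (nhds (1 + Γ * max |1 - 1| |β - β|)) := by
      exact (((((tendsto_const_nhds.sub haφ).abs).max
        ((tendsto_const_nhds.sub hbφ).abs)).const_mul Γ).const_add 1)
    simp only [sub_self, abs_zero, max_self, mul_zero, add_zero] at hT
    exact ge_of_tendsto hT (Filter.Eventually.of_forall hstep)
  have hδβ : δ ≤ |β| := by
    have habs : Filter.Tendsto (fun k => |b (φ k)|) Filter.atTop (nhds |β|) := hbφ.abs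
    exact ge_of_tendsto habs (Filter.Eventually.of_forall fun k => (hc3 (φ k)).le)
  have hβne : β ≠ 0 := fun h => by rw [h] at hδβ; simp at hδβ; linarith
  -- extremality contradiction
  obtain ⟨hmem, hseg⟩ := hext
  have h1 : ((1:ℝ), β) ∈ {q : ℝ × ℝ | N q.1 q.2 ≤ 1} := hNβ
  have h2 : ((1:ℝ), -β) ∈ {q : ℝ × ℝ | N q.1 q.2 ≤ 1} := by
    show N 1 (-β) ≤ 1
    rw [N_abs 1 (-β), abs_neg, ← N_abs]
    exact hNβ
  have h3 : ((1:ℝ), (0:ℝ)) ∈ openSegment ℝ ((1:ℝ), β) ((1:ℝ), -β) := by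
    refine ⟨1/2, 1/2, by norm_num, by norm_num, by norm_num, ?_⟩
    simp [Prod.ext_iff]
    ring
  have := hseg h1 h2 h3
  rw [Prod.ext_iff] at this
  exact hβne this.2


lemma swap_extreme (N : ℝ → ℝ → ℝ)
    (h : ((0 : ℝ), (1 : ℝ)) ∈ Set.extremePoints ℝ {q : ℝ × ℝ | N q.1 q.2 ≤ 1}) :
    ((1 : ℝ), (0 : ℝ)) ∈ Set.extremePoints ℝ {q : ℝ × ℝ | N q.2 q.1 ≤ 1} := by
  obtain ⟨hm, hseg⟩ := h
  refine ⟨hm, ?_⟩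
  rintro ⟨a, b⟩ h1 ⟨c, d⟩ h2 ⟨s, t, hs, ht, hst, heq⟩
  simp only [Prod.smul_mk, Prod.mk_add_mk, Prod.mk.injEq, smul_eq_mul] at heq
  have heq' : ((0:ℝ), (1:ℝ)) ∈ openSegment ℝ ((b:ℝ), a) ((d:ℝ), c) := by
    refine ⟨s, t, hs, ht, hst, ?_⟩
    simp only [Prod.smul_mk, Prod.mk_add_mk, Prod.mk.injEq, smul_eq_mul]
    exact ⟨heq.2, heq.1⟩
  have := hseg h1 h2 heq'
  simp only [Prod.mk.injEq] at this ⊢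
  exact ⟨this.2, this.1⟩


lemma aux_main {X Y : Type*} [NormedAddCommGroup X] [NormedSpace ℝ X] [Nontrivial X]
    [NormedAddCommGroup Y] [NormedSpace ℝ Y] [Nontrivial Y]
    (N : ℝ → ℝ → ℝ)
    (N_triangle : ∀ a b c d : ℝ, N (a + c) (b + d) ≤ N a b + N c d)
    (N_homog : ∀ t a b : ℝ, N (t * a) (t * b) = |t| * N a b)
    (N_abs : ∀ a b : ℝ, N a b = N |a| |b|)
    (N_norm₁ : N 1 0 = 1) (N_norm₂ : N 0 1 = 1)
    (Z : Type*) [NormedAddCommGroup Z] [NormedSpace ℝ Z]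
    (e : Z ≃ₗ[ℝ] X × Y) (hZ : ∀ z : Z, ‖z‖ = N ‖(e z).1‖ ‖(e z).2‖)
    (hext : ((1 : ℝ), (0 : ℝ)) ∈ Set.extremePoints ℝ {q : ℝ × ℝ | N q.1 q.2 ≤ 1})
    (Γ : ℝ) (hΓ : 0 < Γ) (hΓN : ∀ a b : ℝ, N a b ≤ Γ * max |a| |b|) :
    Ts Z ≤ Γ := by
  -- a unit vector in X with norming functional
  obtain ⟨x₀, hx₀⟩ := exists_ne (0 : X)
  obtain ⟨g, hgnorm, hgx₀'⟩ := exists_dual_vector ℝ x₀ (norm_ne_zero_iff.mpr hx₀)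
  have hgx₀ : g x₀ = ‖x₀‖ := by simpa using hgx₀'
  set x : X := ‖x₀‖⁻¹ • x₀ with hx_def
  have hx₀n : ‖x₀‖ ≠ 0 := norm_ne_zero_iff.mpr hx₀
  have hx : ‖x‖ = 1 := by
    rw [hx_def, norm_smul, norm_inv, norm_norm, inv_mul_cancel₀ hx₀n]
  have hgx : g x = 1 := by
    rw [hx_def, map_smul, smul_eq_mul, hgx₀, inv_mul_cancel₀ hx₀n]
  -- a unit vector in Y
  obtain ⟨y₀, hy₀⟩ := exists_ne (0 : Y)
  set y : Y := ‖y₀‖⁻¹ • y₀ with hy_def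
  have hy : ‖y‖ = 1 := by
    rw [hy_def, norm_smul, norm_inv, norm_norm,
      inv_mul_cancel₀ (norm_ne_zero_iff.mpr hy₀)]
  -- the bound ‖(e z).1‖ ≤ ‖z‖
  have hfst : ∀ z : Z, ‖(e z).1‖ ≤ ‖z‖ := by
    intro z
    have := abs_fst_le_N N N_triangle N_homog N_abs N_norm₁ ‖(e z).1‖ ‖(e z).2‖
    rw [abs_norm] at this
    rw [hZ z]; exact this
  -- the functional f on Z
  set L : Z →ₗ[ℝ] ℝ := (g : X →ₗ[ℝ] ℝ) ∘ₗ ((LinearMap.fst ℝ X Y) ∘ₗ (e : Z →ₗ[ℝ] X × Y))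
    with hL_def
  have hLapp : ∀ z : Z, L z = g ((e z).1) := fun z => rfl
  have hbound : ∀ z : Z, ‖L z‖ ≤ 1 * ‖z‖ := by
    intro z
    rw [hLapp, one_mul]
    calc ‖g ((e z).1)‖ ≤ ‖g‖ * ‖(e z).1‖ := g.le_opNorm _
    _ = ‖(e z).1‖ := by rw [hgnorm, one_mul]
    _ ≤ ‖z‖ := hfst z
  set f : Z →L[ℝ] ℝ := L.mkContinuous 1 hbound with hf_def
  have hfapp : ∀ z : Z, f z = g ((e z).1) := fun z => rfl
  have hfnorm : ‖f‖ = 1 := by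
    apply le_antisymm (f.opNorm_le_bound zero_le_one hbound)
    have hz₁ : ‖e.symm (x, (0:Y))‖ = 1 := by
      rw [hZ, e.apply_symm_apply]
      simp only [norm_zero, hx]
      exact N_norm₁
    have h1 : f (e.symm (x, (0:Y))) = 1 := by
      rw [hfapp, e.apply_symm_apply, hgx]
    have := f.le_opNorm (e.symm (x, (0:Y)))
    rw [h1, hz₁, mul_one] at this
    simpa using this
  -- main estimate
  apply le_of_forall_pos_le_add
  intro ε hε
  set δ : ℝ := ε / Γ with hδ_def
  have hδ : 0 < δ := div_pos hε hΓ
  obtain ⟨α, hα, hkey⟩ := key_claim N N_triangle N_homog N_abs N_norm₁ N_norm₂ hext Γ hΓN δ hδ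
  have hbdd : BddBelow {r : ℝ | 0 < r ∧ ∃ x : Z, ‖x‖ = 1 ∧ ∃ S : Set Z,
      IsSlice Z S ∧ S ⊆ closedBall x r} := ⟨0, fun r hr => hr.1.le⟩
  apply csInf_le hbdd
  refine ⟨by linarith, e.symm ((0:X), y), ?_, sliceSet Z f α, ⟨f, hfnorm, α, hα, rfl⟩, ?_⟩
  · rw [hZ, e.apply_symm_apply]
    simp only [norm_zero, hy]
    exact N_norm₂
  · intro z hz
    obtain ⟨hz1, hz2⟩ := hz
    rw [mem_closedBall, dist_zero_right] at hz1
    have hNuv : N ‖(e z).1‖ ‖(e z).2‖ ≤ 1 := by rw [← hZ]; exact hz1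
    have hu1 : ‖(e z).1‖ ≤ 1 := by
      have := abs_fst_le_N N N_triangle N_homog N_abs N_norm₁ ‖(e z).1‖ ‖(e z).2‖
      rw [abs_norm] at this
      linarith
    have hu : 1 - α < ‖(e z).1‖ := by
      have h1 : f z ≤ ‖(e z).1‖ := by
        rw [hfapp]
        calc g ((e z).1) ≤ ‖g ((e z).1)‖ := le_abs_self _
        _ ≤ ‖g‖ * ‖(e z).1‖ := g.le_opNorm _
        _ = ‖(e z).1‖ := by rw [hgnorm, one_mul]
      exact lt_of_lt_of_le hz2 h1
    have hv : ‖(e z).2‖ ≤ δ := by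
      have := hkey ‖(e z).1‖ ‖(e z).2‖ hNuv hu
      rwa [abs_norm] at this
    rw [mem_closedBall, dist_eq_norm]
    have hediff : e (z - e.symm ((0:X), y)) = ((e z).1, (e z).2 - y) := by
      rw [map_sub, e.apply_symm_apply]
      ext <;> simp
    rw [hZ, hediff]
    simp only
    have hvy : ‖(e z).2 - y‖ ≤ 1 + δ := by
      calc ‖(e z).2 - y‖ ≤ ‖(e z).2‖ + ‖y‖ := norm_sub_le _ _
      _ ≤ δ + 1 := by rw [hy]; linarith
      _ = 1 + δ := by ring
    calc N ‖(e z).1‖ ‖(e z).2 - y‖ ≤ Γ * max |‖(e z).1‖| |‖(e z).2 - y‖| := hΓN _ _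
    _ = Γ * max ‖(e z).1‖ ‖(e z).2 - y‖ := by rw [abs_norm, abs_norm]
    _ ≤ Γ * (1 + δ) := by
        apply mul_le_mul_of_nonneg_left _ hΓ.le
        exact max_le (by linarith) hvy
    _ = Γ + ε := by rw [hδ_def]; field_simp


theorem stmt_6 (X Y : Type*) [NormedAddCommGroup X] [NormedSpace ℝ X]
    [CompleteSpace X] [Nontrivial X] [NormedAddCommGroup Y] [NormedSpace ℝ Y]
    [CompleteSpace Y] [Nontrivial Y]
    (N : ℝ → ℝ → ℝ)
    (N_triangle : ∀ a b c d : ℝ, N (a + c) (b + d) ≤ N a b + N c d)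
    (N_homog : ∀ t a b : ℝ, N (t * a) (t * b) = |t| * N a b)
    (N_pos : ∀ a b : ℝ, N a b = 0 → a = 0 ∧ b = 0)
    (N_abs : ∀ a b : ℝ, N a b = N |a| |b|)
    (N_norm₁ : N 1 0 = 1) (N_norm₂ : N 0 1 = 1)
    (Z : Type*) [NormedAddCommGroup Z] [NormedSpace ℝ Z] [CompleteSpace Z]
    (e : Z ≃ₗ[ℝ] X × Y) (hZ : ∀ z : Z, ‖z‖ = N ‖(e z).1‖ ‖(e z).2‖)
    (hext : ((1 : ℝ), (0 : ℝ)) ∈ Set.extremePoints ℝ {q : ℝ × ℝ | N q.1 q.2 ≤ 1} ∨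
      ((0 : ℝ), (1 : ℝ)) ∈ Set.extremePoints ℝ {q : ℝ × ℝ | N q.1 q.2 ≤ 1})
    (Γ : ℝ) (hΓ : 0 < Γ) (hΓN : ∀ a b : ℝ, N a b ≤ Γ * max |a| |b|) :
    Ts Z ≤ Γ ∧
      ∀ (p : ENNReal) [Fact (1 ≤ p)], 1 < p → p ≠ ⊤ →
        Ts (WithLp p (X × Y)) ≤ (2 : ℝ) ^ (1 / p.toReal) := by
  constructor
  · rcases hext with h | h
    · exact aux_main N N_triangle N_homog N_abs N_norm₁ N_norm₂ Z e hZ h Γ hΓ hΓN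
    · refine aux_main (fun a b => N b a) (fun a b c d => N_triangle b a d c)
        (fun t a b => N_homog t b a) (fun a b => N_abs b a) N_norm₂ N_norm₁ Z
        (e.trans (LinearEquiv.prodComm ℝ X Y)) ?_ (swap_extreme N h) Γ hΓ ?_
      · intro z; rw [hZ z]; rfl
      · intro a b; rw [max_comm]; exact hΓN b a
  · intro p _inst hp hptop
    set q : ℝ := p.toReal with hq_def
    have hq1 : 1 < q := by
      rw [hq_def]
      rw [← ENNReal.toReal_one]
      exact (ENNReal.toReal_lt_toReal (by simp) hptop).mpr hp
    have hq0 : 0 < q := zero_lt_one.trans hq1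
    have hqne : q ≠ 0 := hq0.ne'
    set Np : ℝ → ℝ → ℝ := fun a b => ‖(WithLp.equiv p (ℝ × ℝ)).symm (a, b)‖ with hNp_def
    have hNp_formula : ∀ a b : ℝ, Np a b = (|a| ^ q + |b| ^ q) ^ (1/q) := by
      intro a b
      show ‖(WithLp.equiv p (ℝ × ℝ)).symm (a, b)‖ = _
      rw [WithLp.prod_norm_eq_add hq0]
      simp [Real.norm_eq_abs]
      rfl
    have hadd : ∀ a b c d : ℝ, (WithLp.equiv p (ℝ × ℝ)).symm (a + c, b + d) =
        (WithLp.equiv p (ℝ × ℝ)).symm (a, b) + (WithLp.equiv p (ℝ × ℝ)).symm (c, d) := by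
      intro a b c d; rfl
    have hNp_triangle : ∀ a b c d : ℝ, Np (a + c) (b + d) ≤ Np a b + Np c d := by
      intro a b c d
      rw [hNp_def]; simp only; rw [hadd]
      exact norm_add_le _ _
    have hsmul : ∀ t a b : ℝ, (WithLp.equiv p (ℝ × ℝ)).symm (t * a, t * b) =
        t • (WithLp.equiv p (ℝ × ℝ)).symm (a, b) := by
      intro t a b; rfl
    have hNp_homog : ∀ t a b : ℝ, Np (t * a) (t * b) = |t| * Np a b := by
      intro t a b
      rw [hNp_def]; simp only; rw [hsmul, norm_smul, Real.norm_eq_abs]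
    have hNp_pos : ∀ a b : ℝ, Np a b = 0 → a = 0 ∧ b = 0 := by
      intro a b h
      rw [hNp_def] at h; simp only at h
      rw [norm_eq_zero] at h
      have : ((a, b) : ℝ × ℝ) = 0 := by
        have := congrArg (WithLp.equiv p (ℝ × ℝ)) h
        simpa using this
      rw [Prod.mk_eq_zero] at this
      exact this
    have hNp_abs : ∀ a b : ℝ, Np a b = Np |a| |b| := by
      intro a b
      rw [hNp_formula, hNp_formula, abs_abs, abs_abs]
    have hNp_norm₁ : Np 1 0 = 1 := by
      rw [hNp_formula]
      rw [abs_one, abs_zero, Real.one_rpow, Real.zero_rpow hqne, add_zero, Real.one_rpow]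
    have hNp_norm₂ : Np 0 1 = 1 := by
      rw [hNp_formula]
      rw [abs_one, abs_zero, Real.one_rpow, Real.zero_rpow hqne, zero_add, Real.one_rpow]
    -- Γ bound
    have hΓpos : (0:ℝ) < 2 ^ (1/q) := Real.rpow_pos_of_pos two_pos _
    have hΓN : ∀ a b : ℝ, Np a b ≤ 2 ^ (1/q) * max |a| |b| := by
      intro a b
      rw [hNp_formula]
      set m := max |a| |b| with hm_def
      have hm0 : 0 ≤ m := le_trans (abs_nonneg a) (le_max_left _ _)
      have h1 : |a| ^ q ≤ m ^ q := Real.rpow_le_rpow (abs_nonneg a) (le_max_left _ _) hq0.le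
      have h2 : |b| ^ q ≤ m ^ q := Real.rpow_le_rpow (abs_nonneg b) (le_max_right _ _) hq0.le
      calc (|a| ^ q + |b| ^ q) ^ (1/q) ≤ (2 * m ^ q) ^ (1/q) := by
            apply Real.rpow_le_rpow (by positivity) (by linarith) (by positivity)
      _ = 2 ^ (1/q) * m := by
            rw [Real.mul_rpow (by norm_num) (by positivity), one_div,
              Real.rpow_rpow_inv hm0 hqne]
    -- extreme point
    have habs_le : ∀ a b : ℝ, |a| ≤ Np a b := by
      intro a b
      exact abs_fst_le_N Np hNp_triangle hNp_homog hNp_abs hNp_norm₁ a b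
    have hext : ((1 : ℝ), (0 : ℝ)) ∈ Set.extremePoints ℝ {q' : ℝ × ℝ | Np q'.1 q'.2 ≤ 1} := by
      constructor
      · show Np 1 0 ≤ 1
        rw [hNp_norm₁]
      · rintro ⟨a, b⟩ h1 ⟨c, d⟩ h2 ⟨s, t, hs, ht, hst, heq⟩
        simp only [Prod.smul_mk, Prod.mk_add_mk, Prod.mk.injEq, smul_eq_mul] at heq
        have h1' : Np a b ≤ 1 := h1
        have h2' : Np c d ≤ 1 := h2
        have ha1 : a ≤ 1 := (abs_le.mp ((habs_le a b).trans h1')).2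
        have hc1 : c ≤ 1 := (abs_le.mp ((habs_le c d).trans h2')).2
        have ha : a = 1 := by nlinarith [heq.1]
        have hc : c = 1 := by nlinarith [heq.1]
        -- second coordinates vanish
        have key : ∀ x : ℝ, Np 1 x ≤ 1 → x = 0 := by
          intro x hx
          rw [hNp_formula, abs_one, Real.one_rpow] at hx
          by_contra hxne
          have hxpos : 0 < |x| ^ q := Real.rpow_pos_of_pos (abs_pos.mpr hxne) q
          have h11 : 1 < 1 + |x| ^ q := by linarith
          have : 1 < (1 + |x| ^ q) ^ (1/q) :=
            (Real.one_lt_rpow_iff_of_pos (by linarith)).mpr (Or.inl ⟨h11, by positivity⟩)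
          linarith
        have hb : b = 0 := key b (ha ▸ h1')
        have hd : d = 0 := key d (hc ▸ h2')
        simp [ha, hb, hc, hd]
    -- hZ
    have hZ : ∀ z : WithLp p (X × Y), ‖z‖ =
        Np ‖((WithLp.linearEquiv p ℝ (X × Y)) z).1‖ ‖((WithLp.linearEquiv p ℝ (X × Y)) z).2‖ := by
      intro z
      rw [hNp_formula, WithLp.prod_norm_eq_add hq0]
      simp [abs_norm]
      rfl
    exact aux_main Np hNp_triangle hNp_homog hNp_abs hNp_norm₁ hNp_norm₂ (WithLp p (X × Y))
      (WithLp.linearEquiv p ℝ (X × Y)) hZ hext ((2:ℝ) ^ (1/q)) hΓpos hΓN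
end
end
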